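/- arXiv:1506.08375 — 11 statements merged into one kernel-verified Lean document; each statement's English description precedes it below -/
import Mathlib

section
/- Let q be a finite one-dimensional word. There exists an aperiodic (not eventually periodic in the sense of having no period) right-infinite q-coverable word if and only if the primitive root of q has a non-empty border. -/
def lpow {α : Type*} (w : List α) (n : ℕ) : List α :=
  (List.replicate n w).flatten

/-- `q` occurs in the right-infinite word `w` at position `a`. -/
def OccursAt {α : Type*} (q : List α) (w : ℕ → α) (a : ℕ) : Prop :=
  ∀ j : Fin q.length, w (a + j) = q.get j

/-- Every position of `w` lies inside some occurrence of `q`. -/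
def Covers {α : Type*} (q : List α) (w : ℕ → α) : Prop :=
  ∀ i : ℕ, ∃ a : ℕ, a ≤ i ∧ i < a + q.length ∧ OccursAt q w a

/-- A right-infinite word is aperiodic if it has no period `p > 0`. -/
def Aperiodic {α : Type*} (w : ℕ → α) : Prop :=
  ¬ ∃ p : ℕ, 0 < p ∧ ∀ i : ℕ, w (i + p) = w i

/-!
Write `e = |r|` and `r^ω` for the periodic word `n ↦ r[n mod e]`. Primitivity of `r` means that
every period of `r^ω` is a multiple of `e`: a period `t` yields the period `gcd t e`, and a proper
divisor of `e` as a period would make `r` a proper power.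

If `r` has no proper border, two occurrences of `q = r^k` that overlap or touch start at positions
congruent mod `e`: a short overlap would be a border of `r`, a long one a period of `r^ω`.
Chaining the occurrences that cover consecutive positions shows that every `q`-covered word has
period `e`.

Conversely, if `r` has a border of length `β`, concatenate the blocks `r^(j+k+1)`, `j = 0, 1, …`,
each overlapping the next one in that border. Every block is `q`-covered. As the blocks grow, a
period `p` of the resulting word compares block `p` with block `p + 1` across the shift `e * p`,
which forces `r^ω` to have the period `e - β`, not a multiple of `e`.
-/

open Function

theorem Function.Periodic.nat_gcd {α : Type*} {f : ℕ → α} {s t : ℕ}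
    (hs : Periodic f s) (ht : Periodic f t) : Periodic f (s.gcd t) := by
  by_cases h : s.gcd t < t
  · obtain ⟨m, -, hm⟩ := Nat.exists_mul_mod_eq_gcd h
    intro x
    calc f (x + s.gcd t) = f (x + s * m % t + s * m / t * t) := by
          rw [hm]; exact (ht.nat_mul _ _).symm
      _ = f (x + m * s) := by rw [add_assoc, Nat.mod_add_div', mul_comm]
      _ = f x := hs.nat_mul m x
  · rcases Nat.eq_zero_or_pos t with rfl | ht0
    · simpa using hs
    · rwa [le_antisymm (Nat.gcd_le_right _ ht0) (not_lt.1 h)]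

section

variable {α : Type*}

theorem lpow_length (w : List α) (n : ℕ) : (lpow w n).length = n * w.length := by
  simp [lpow]

theorem lpow_succ (w : List α) (n : ℕ) : lpow w (n + 1) = w ++ lpow w n := by
  simp [lpow, List.replicate_succ]

theorem lpow_add (w : List α) (m n : ℕ) : lpow w (m + n) = lpow w m ++ lpow w n := by
  rw [lpow, List.replicate_add, List.flatten_append, lpow, lpow]

theorem lpow_mul (w : List α) (m n : ℕ) : lpow w (m * n) = lpow (lpow w m) n := by
  induction n with
  | zero => simp [lpow]
  | succ n ih => rw [lpow_succ, ← ih, Nat.mul_succ, add_comm, lpow_add]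

def periodicWord (r : List α) (hr : 0 < r.length) (n : ℕ) : α :=
  r[n % r.length]'(Nat.mod_lt _ hr)

def HasBorderOfLength (r : List α) (hr : 0 < r.length) (β : ℕ) : Prop :=
  0 < β ∧ β < r.length ∧ ∀ s < β, periodicWord r hr (s + (r.length - β)) = periodicWord r hr s

section PeriodicWord

variable (r : List α) (hr : 0 < r.length)

theorem periodicWord_periodic : Periodic (periodicWord r hr) r.length := by
  intro n
  simp [periodicWord]

theorem periodicWord_of_lt {n : ℕ} (hn : n < r.length) : periodicWord r hr n = r[n] := by
  simp [periodicWord, Nat.mod_eq_of_lt hn]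

theorem periodicWord_eq_of_modEq {m n : ℕ} (h : m ≡ n [MOD r.length]) :
    periodicWord r hr m = periodicWord r hr n := by
  rw [← (periodicWord_periodic r hr).map_mod_nat, h, (periodicWord_periodic r hr).map_mod_nat]

theorem lpow_getElem (n i : ℕ) (hi : i < (lpow r n).length) :
    (lpow r n)[i] = periodicWord r hr i := by
  induction n generalizing i with
  | zero => simp [lpow_length] at hi
  | succ n ih =>
    simp only [List.getElem_of_eq (lpow_succ r n)]
    by_cases h : i < r.length
    · rw [List.getElem_append_left h, periodicWord_of_lt r hr h]
    · rw [List.getElem_append_right (by omega), ih, ← periodicWord_periodic r hr (i - r.length),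
        Nat.sub_add_cancel (by omega)]

theorem occursAt_lpow_iff {w : ℕ → α} {k a : ℕ} :
    OccursAt (lpow r k) w a ↔ ∀ j < k * r.length, w (a + j) = periodicWord r hr j := by
  simp only [OccursAt, List.get_eq_getElem, lpow_getElem r hr]
  exact ⟨fun h j hj => h ⟨j, by rwa [lpow_length]⟩,
    fun h j => h j (by simpa [lpow_length] using j.isLt)⟩

theorem exists_occursAt_lpow_of_forall_lt {k : ℕ} (hk : 0 < k) {w : ℕ → α} :
    ∀ {m a i : ℕ}, k ≤ m → (∀ t < m * r.length, w (a + t) = periodicWord r hr t) →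
      a ≤ i → i < a + m * r.length →
        ∃ a', a' ≤ i ∧ i < a' + k * r.length ∧ OccursAt (lpow r k) w a' := by
  intro m
  induction m with
  | zero => intro a i _ _ hai hi; omega
  | succ m ih =>
    intro a i hkm hw hai hi
    rw [Nat.succ_mul] at hw hi
    by_cases hik : i < a + k * r.length
    · refine ⟨a, hai, hik, (occursAt_lpow_iff r hr).2 fun t ht => hw t ?_⟩
      have : k * r.length ≤ m * r.length + r.length := by
        rw [← Nat.succ_mul]; exact Nat.mul_le_mul_right _ hkm
      omega
    · have hke : r.length ≤ k * r.length := Nat.le_mul_of_pos_left _ hk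
      have hkm' : k ≤ m := by
        by_contra hmk
        have : (m + 1) * r.length ≤ k * r.length := Nat.mul_le_mul_right _ (by omega)
        rw [Nat.succ_mul] at this
        omega
      refine ih (a := a + r.length) hkm' (fun t ht => ?_) (by omega) (by omega)
      rw [add_assoc, hw _ (by omega), add_comm, periodicWord_periodic r hr t]

theorem periodic_of_forall_lt {d : ℕ}
    (h : ∀ x < r.length, periodicWord r hr (x + d) = periodicWord r hr x) :
    Periodic (periodicWord r hr) d := by
  intro x
  rw [← (periodicWord_periodic r hr).map_mod_nat x, ← h _ (Nat.mod_lt x hr)]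
  exact periodicWord_eq_of_modEq r hr ((Nat.mod_modEq x _).symm.add_right d)

theorem eq_lpow_take_of_periodic {g : ℕ} (hg : 0 < g) (hgr : g ∣ r.length)
    (h : Periodic (periodicWord r hr) g) : r = lpow (r.take g) (r.length / g) := by
  have hgle : g ≤ r.length := Nat.le_of_dvd hr hgr
  have hlen : (r.take g).length = g := List.length_take_of_le hgle
  apply List.ext_getElem
  · rw [lpow_length, hlen, Nat.div_mul_cancel hgr]
  · intro i hi _
    have hmod : i % g < g := Nat.mod_lt i hg
    calc r[i] = periodicWord r hr (i % g) := by rw [h.map_mod_nat, periodicWord_of_lt r hr hi]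
      _ = (r.take g)[i % g]'(by omega) := by
        rw [periodicWord_of_lt r hr (by omega), List.getElem_take]
      _ = _ := by rw [lpow_getElem _ (by omega)]; simp only [periodicWord, hlen]

theorem dvd_of_periodic_periodicWord {k : ℕ} (hk : 0 < k)
    (hmin : ∀ (s : List α) (m : ℕ), 0 < m → lpow r k = lpow s m → r.length ≤ s.length)
    {t : ℕ} (ht : Periodic (periodicWord r hr) t) : r.length ∣ t := by
  set g := t.gcd r.length
  have hgr : g ∣ r.length := Nat.gcd_dvd_right t r.length
  have hg : 0 < g := Nat.gcd_pos_of_pos_right t hr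
  suffices g = r.length from this ▸ Nat.gcd_dvd_left t r.length
  by_contra hne
  have hr_eq := eq_lpow_take_of_periodic r hr hg hgr (ht.nat_gcd (periodicWord_periodic r hr))
  have hgle : g ≤ r.length := Nat.le_of_dvd hr hgr
  have := hmin (r.take g) (r.length / g * k) (Nat.mul_pos (Nat.div_pos hgle hg) hk)
    (by rw [lpow_mul, ← hr_eq])
  rw [List.length_take_of_le hgle] at this
  exact hne (le_antisymm hgle this)

theorem exists_border_iff :
    (∃ b : List α, b ≠ [] ∧ b ≠ r ∧ b <+: r ∧ b <:+ r) ↔ ∃ β, HasBorderOfLength r hr β := by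
  constructor
  · rintro ⟨b, hb, hbr, hpre, hsuf⟩
    have hβe : b.length < r.length :=
      lt_of_le_of_ne hpre.length_le fun h => hbr (hpre.eq_of_length h)
    refine ⟨b.length, List.length_pos_iff.2 hb, hβe, fun s hs => ?_⟩
    rw [add_comm s, periodicWord_of_lt r hr (by omega), periodicWord_of_lt r hr (by omega),
      ← hsuf.getElem hs, hpre.getElem hs]
  · rintro ⟨β, hβ, hβe, hb⟩
    have hlen : (r.take β).length = β := List.length_take_of_le hβe.le
    refine ⟨r.take β, ?_, fun h => ?_, List.take_prefix _ _, ?_⟩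
    · exact List.ne_nil_of_length_pos (by omega)
    · rw [h] at hlen
      omega
    · rw [List.suffix_iff_eq_drop, hlen]
      apply List.ext_getElem
      · rw [List.length_drop]; omega
      · intro s hs _
        rw [hlen] at hs
        rw [List.getElem_take, List.getElem_drop, ← periodicWord_of_lt r hr (by omega),
          ← periodicWord_of_lt r hr (by omega), add_comm, hb s hs]

end PeriodicWord

section NoBorder

variable (r : List α) (hr : 0 < r.length) {k : ℕ} (hk : 0 < k)
    (hmin : ∀ (s : List α) (m : ℕ), 0 < m → lpow r k = lpow s m → r.length ≤ s.length)
    (hnb : ¬ ∃ β, HasBorderOfLength r hr β)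

include hk hmin hnb in
theorem modEq_of_occursAt {w : ℕ → α} {a a' : ℕ} (ho : OccursAt (lpow r k) w a)
    (ho' : OccursAt (lpow r k) w a') (h : a ≤ a') (h' : a' ≤ a + k * r.length) :
    a ≡ a' [MOD r.length] := by
  rw [occursAt_lpow_iff r hr] at ho ho'
  rw [Nat.modEq_iff_dvd' h]
  set d := a' - a
  have hover : ∀ s, s + d < k * r.length → periodicWord r hr (s + d) = periodicWord r hr s :=
    fun s hs => by
      rw [← ho _ hs, ← ho' s (by omega)]
      congr 1
      omega
  have hke : r.length ≤ k * r.length := Nat.le_mul_of_pos_left _ hk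
  rcases lt_or_ge (k * r.length - d) r.length with hshort | hlong
  · by_contra hnd
    have hd : d < k * r.length := by
      refine lt_of_le_of_ne (by omega) fun hd => hnd ?_
      exact hd ▸ dvd_mul_left _ _
    refine hnb ⟨k * r.length - d, by omega, hshort, fun s hs => ?_⟩
    rw [← hover s (by omega), ← (periodicWord_periodic r hr).nat_mul (k - 1)]
    congr 1
    rw [Nat.cast_id, Nat.sub_one_mul]
    omega
  · exact dvd_of_periodic_periodicWord r hr hk hmin
      (periodic_of_forall_lt r hr fun x hx => hover x (by omega))

include hk hmin hnb in
theorem periodic_of_covers {w : ℕ → α} (hcov : Covers (lpow r k) w) : Periodic w r.length := by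
  choose A hA hA' hocc using hcov
  simp only [lpow_length] at hA'
  have hchain : ∀ i, A i ≡ A 0 [MOD r.length] := by
    intro i
    induction i with
    | zero => rfl
    | succ i ih =>
      refine Nat.ModEq.trans ?_ ih
      have := hA' i
      have := hA' (i + 1)
      have := hA i
      have := hA (i + 1)
      rcases le_total (A i) (A (i + 1)) with h | h
      · exact (modEq_of_occursAt r hr hk hmin hnb (hocc i) (hocc (i + 1)) h (by omega)).symm
      · exact modEq_of_occursAt r hr hk hmin hnb (hocc (i + 1)) (hocc i) h (by omega)
  have hval : ∀ i, w i = periodicWord r hr (i - A i) := fun i => by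
    rw [← (occursAt_lpow_iff r hr).1 (hocc i) (i - A i) (by have := hA i; have := hA' i; omega),
      Nat.add_sub_cancel' (hA i)]
  intro i
  rw [hval, hval]
  apply periodicWord_eq_of_modEq
  refine Nat.ModEq.add_right_cancel ((hchain (i + r.length)).trans (hchain i).symm) ?_
  rw [Nat.sub_add_cancel (hA _), Nat.sub_add_cancel (hA _)]
  exact Nat.add_modEq_right

end NoBorder

def blockStart (L : ℕ → ℕ) : ℕ → ℕ
  | 0 => 0
  | j + 1 => blockStart L j + L j

def blockIndex (L : ℕ → ℕ) (i : ℕ) : ℕ :=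
  Nat.findGreatest (fun j => blockStart L j ≤ i) i

section Blocks

variable {L : ℕ → ℕ} (hL : ∀ j, 0 < L j)

include hL in
theorem blockStart_strictMono : StrictMono (blockStart L) :=
  strictMono_nat_of_lt_succ fun j => Nat.lt_add_of_pos_right (hL j)

theorem blockStart_blockIndex_le (i : ℕ) : blockStart L (blockIndex L i) ≤ i :=
  Nat.findGreatest_spec (P := fun j => blockStart L j ≤ i) (Nat.zero_le i) (Nat.zero_le i)

include hL in
theorem lt_blockStart_blockIndex_succ (i : ℕ) : i < blockStart L (blockIndex L i + 1) := by
  by_contra h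
  by_cases hle : blockIndex L i + 1 ≤ i
  · exact Nat.findGreatest_is_greatest (Nat.lt_succ_self _) hle (not_lt.1 h)
  · have := (blockStart_strictMono hL).id_le (blockIndex L i + 1)
    simp only [id] at this
    omega

include hL in
theorem blockIndex_eq {i j : ℕ} (h : blockStart L j ≤ i) (h' : i < blockStart L (j + 1)) :
    blockIndex L i = j := by
  have hmono := (blockStart_strictMono hL).monotone
  rcases lt_trichotomy (blockIndex L i) j with hlt | heq | hgt
  · exact absurd ((hmono hlt).trans h) (not_le.2 (lt_blockStart_blockIndex_succ hL i))
  · exact heq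
  · exact absurd ((hmono hgt).trans (blockStart_blockIndex_le i)) (not_le.2 h')

end Blocks

def blockWord (r : List α) (hr : 0 < r.length) (L : ℕ → ℕ) (i : ℕ) : α :=
  periodicWord r hr (i - blockStart L (blockIndex L i))

theorem blockWord_blockStart_add (r : List α) (hr : 0 < r.length) {L : ℕ → ℕ}
    (hL : ∀ j, 0 < L j) {j t : ℕ} (ht : t < L j) :
    blockWord r hr L (blockStart L j + t) = periodicWord r hr t := by
  rw [blockWord, blockIndex_eq hL (Nat.le_add_right _ _) (by rw [blockStart]; omega),
    Nat.add_sub_cancel_left]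

def borderedBlockLength (e k β j : ℕ) : ℕ :=
  (j + k + 1) * e - β

-- Block `j` is `r^(j+k+1)` without its last `β` letters, which the next block supplies when
-- `r` has a border of length `β`.
def borderedWord (r : List α) (hr : 0 < r.length) (k β : ℕ) : ℕ → α :=
  blockWord r hr (borderedBlockLength r.length k β)

section Bordered

variable (r : List α) (hr : 0 < r.length) {k β : ℕ}

theorem borderedBlockLength_pos (hβe : β < r.length) (j : ℕ) :
    0 < borderedBlockLength r.length k β j := by
  have : r.length ≤ (j + k + 1) * r.length := Nat.le_mul_of_pos_left _ (Nat.succ_pos _)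
  rw [borderedBlockLength]
  omega

theorem borderedWord_blockStart_add (hβ : HasBorderOfLength r hr β) {j t : ℕ}
    (ht : t < (j + k + 1) * r.length) :
    borderedWord r hr k β (blockStart (borderedBlockLength r.length k β) j + t) =
      periodicWord r hr t := by
  obtain ⟨-, hβe, hb⟩ := hβ
  have hL := borderedBlockLength_pos r (k := k) hβe
  by_cases h : t < borderedBlockLength r.length k β j
  · exact blockWord_blockStart_add r hr hL h
  · obtain ⟨s, rfl⟩ := Nat.exists_eq_add_of_le (not_lt.1 h)
    have hLj : borderedBlockLength r.length k β j = (j + k) * r.length + r.length - β := by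
      rw [borderedBlockLength, add_one_mul]
    have hLj' : borderedBlockLength r.length k β (j + 1) =
        (j + k) * r.length + r.length + r.length - β := by
      rw [borderedBlockLength, add_right_comm j, add_one_mul, add_one_mul]
    rw [add_one_mul] at ht
    have hs : s < borderedBlockLength r.length k β (j + 1) := by
      generalize (j + k) * r.length = E at *
      omega
    rw [borderedWord, ← add_assoc, ← blockStart, blockWord_blockStart_add r hr hL hs,
      ← hb s (by omega), ← (periodicWord_periodic r hr).nat_mul (j + k), Nat.cast_id]
    congr 1
    generalize (j + k) * r.length = E at *
    omega

theorem covers_borderedWord (hβ : HasBorderOfLength r hr β) (hk : 0 < k) :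
    Covers (lpow r k) (borderedWord r hr k β) := by
  intro i
  have hL := borderedBlockLength_pos r (k := k) hβ.2.1
  have hi := lt_blockStart_blockIndex_succ hL i
  rw [blockStart, borderedBlockLength] at hi
  simpa only [lpow_length] using exists_occursAt_lpow_of_forall_lt r hr hk
    (m := blockIndex (borderedBlockLength r.length k β) i + k + 1) (by omega)
    (fun t ht => borderedWord_blockStart_add r hr hβ ht) (blockStart_blockIndex_le i) (by omega)

theorem aperiodic_borderedWord (hβ : HasBorderOfLength r hr β) (hk : 0 < k)
    (hmin : ∀ (s : List α) (m : ℕ), 0 < m → lpow r k = lpow s m → r.length ≤ s.length) :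
    Aperiodic (borderedWord r hr k β) := by
  rintro ⟨p, hp, hper⟩
  have ⟨hβ0, hβe, _⟩ := hβ
  set S := blockStart (borderedBlockLength r.length k β)
  have hS : S (p + 1) = S p + ((p + k + 1) * r.length - β) := rfl
  have hk1 : (k + 1) * r.length = k * r.length + r.length := add_one_mul _ _
  have hke : r.length ≤ (k + 1) * r.length := Nat.le_mul_of_pos_left _ (Nat.succ_pos _)
  have hpe : r.length ≤ r.length * p := Nat.le_mul_of_pos_right _ hp
  have hpk : (p + k + 1) * r.length = r.length * p + (k + 1) * r.length := by ring
  have hrot : Periodic (periodicWord r hr) (r.length - β) :=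
    periodic_of_forall_lt r hr fun x hx => by
      have hnext := borderedWord_blockStart_add r hr hβ (k := k) (j := p + 1) (t := x) (by
        have : (p + 1 + k + 1) * r.length = (p + k + 1) * r.length + r.length := by ring
        omega)
      have hprev := borderedWord_blockStart_add r hr hβ (k := k) (j := p)
        (t := (k + 1) * r.length - β + x) (by omega)
      have hshift : S p + ((k + 1) * r.length - β + x) + r.length * p = S (p + 1) + x := by
        omega
      have := Periodic.nat_mul hper r.length (S p + ((k + 1) * r.length - β + x))
      rw [Nat.cast_id, hshift, hnext, hprev] at this
      rw [this, ← (periodicWord_periodic r hr).nat_mul k, Nat.cast_id]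
      congr 1
      omega
  have := Nat.le_of_dvd (by omega) (dvd_of_periodic_periodicWord r hr hk hmin hrot)
  omega

end Bordered

end

theorem stmt2 {α : Type*} (q r : List α) (hq : q ≠ [])
    (hroot : ∃ k : ℕ, 0 < k ∧ q = lpow r k)
    (hmin : ∀ (s : List α) (k : ℕ), 0 < k → q = lpow s k → r.length ≤ s.length) :
    (∃ w : ℕ → α, Covers q w ∧ Aperiodic w) ↔
      ∃ b : List α, b ≠ [] ∧ b ≠ r ∧ b <+: r ∧ b <:+ r := by
  obtain ⟨k, hk, rfl⟩ := hroot
  have hr : 0 < r.length := List.length_pos_iff.2 fun h => hq (by simp [h, lpow])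
  rw [exists_border_iff r hr]
  constructor
  · rintro ⟨w, hcov, hap⟩
    by_contra hnb
    exact hap ⟨r.length, hr, periodic_of_covers r hr hk hmin hnb hcov⟩
  · rintro ⟨β, hβ⟩
    exact ⟨borderedWord r hr k β, covers_borderedWord r hr hβ hk,
      aperiodic_borderedWord r hr hβ hk hmin⟩
end

section
/- Every two-dimensional rectangular finite word (block) has a unique primitive root: if q has two roots r₁ and r₂ (meaning q = r₁^{n₁×m₁} and q = r₂^{n₂×m₂} as rectangular tilings), then there exists a block r that is a root of both r₁ and r₂. -/
/-- `r` (of size `w' × h'`) is a root of the block `q` (of size `w × h`):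
`q` is tiled by copies of `r`. -/
def IsRoot {α : Type*} (w' h' : ℕ) (r : ℕ → ℕ → α) (w h : ℕ) (q : ℕ → ℕ → α) : Prop :=
  0 < w' ∧ 0 < h' ∧ (∃ n : ℕ, 0 < n ∧ w = n * w') ∧ (∃ m : ℕ, 0 < m ∧ h = m * h') ∧
    ∀ x < w, ∀ y < h, q x y = r (x % w') (y % h')

/-!
Reading a block of width `w` cyclically, i.e. as a function on `ZMod w`, a horizontal period
`p ∣ w` of the block becomes a period of a function on a group. Periods of a function on a group
are closed under integer combinations, so by Bézout `gcd p₁ p₂` is again a period; the same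
holds vertically. Hence the block is tiled by its `gcd w₁ w₂ × gcd h₁ h₂` top-left corner, and
this corner is a root of both `r₁` and `r₂`.
-/

open Function

section OneDimensional

variable {α : Type*} {w p : ℕ} {f : ℕ → α}

theorem periodic_zmod_of_forall_mod_eq [NeZero w] (hp : p ∣ w)
    (hf : ∀ x < w, f x = f (x % p)) :
    Periodic (fun z : ZMod w => f z.val) (p : ZMod w) := by
  intro z
  obtain ⟨x, rfl⟩ := ZMod.natCast_zmod_surjective z
  simp only [← Nat.cast_add]
  rw [ZMod.val_natCast, ZMod.val_natCast,
    hf _ (Nat.mod_lt _ (NeZero.pos w)), hf (x % w) (Nat.mod_lt _ (NeZero.pos w)),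
    Nat.mod_mod_of_dvd _ hp, Nat.mod_mod_of_dvd _ hp, Nat.add_mod_right]

theorem forall_mod_eq_of_periodic_zmod (hf : Periodic (fun z : ZMod w => f z.val) (p : ZMod w)) :
    ∀ x < w, f x = f (x % p) := by
  intro x hx
  have hx' : ((x % p + x / p * p : ℕ) : ZMod w) = (x % p : ℕ) + (x / p : ℕ) * p := by
    push_cast; rfl
  have := hf.nat_mul (x / p) (x % p : ℕ)
  rwa [← hx', Nat.mod_add_div', ZMod.val_natCast_of_lt hx,
    ZMod.val_natCast_of_lt ((Nat.mod_le x p).trans_lt hx)] at this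

theorem forall_mod_gcd_eq {p₁ p₂ : ℕ} (hp₁ : p₁ ∣ w) (hp₂ : p₂ ∣ w)
    (hf₁ : ∀ x < w, f x = f (x % p₁)) (hf₂ : ∀ x < w, f x = f (x % p₂)) :
    ∀ x < w, f x = f (x % Nat.gcd p₁ p₂) := by
  obtain rfl | hw := eq_or_ne w 0
  · simp
  have : NeZero w := ⟨hw⟩
  apply forall_mod_eq_of_periodic_zmod
  have bezout : ((Nat.gcd p₁ p₂ : ℕ) : ZMod w) =
      (Nat.gcdA p₁ p₂ : ZMod w) * p₁ + (Nat.gcdB p₁ p₂ : ZMod w) * p₂ := by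
    have := congrArg (Int.cast : ℤ → ZMod w) (Nat.gcd_eq_gcd_ab p₁ p₂)
    push_cast at this
    rw [this]; ring
  rw [bezout]
  exact ((periodic_zmod_of_forall_mod_eq hp₁ hf₁).int_mul _).add_period
    ((periodic_zmod_of_forall_mod_eq hp₂ hf₂).int_mul _)

end OneDimensional

theorem exists_pos_mul_eq_of_dvd {n d : ℕ} (hn : 0 < n) (hd : d ∣ n) :
    ∃ k, 0 < k ∧ n = k * d := by
  obtain ⟨k, rfl⟩ := hd
  exact ⟨k, Nat.pos_of_mul_pos_left hn, mul_comm _ _⟩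

section Blocks

variable {α : Type*} {w h a b : ℕ} {q : ℕ → ℕ → α}

/-- The `w × h` block `q` is tiled by its own top-left `a × b` corner. -/
def HasPeriods (w h : ℕ) (q : ℕ → ℕ → α) (a b : ℕ) : Prop :=
  ∀ x < w, ∀ y < h, q x y = q (x % a) (y % b)

theorem HasPeriods.apply_eq_apply_mod_left (hq : HasPeriods w h q a b) :
    ∀ x < w, ∀ y < h, q x y = q (x % a) y := by
  intro x hx y hy
  rw [hq x hx y hy, hq _ ((Nat.mod_le x a).trans_lt hx) y hy, Nat.mod_mod]

theorem HasPeriods.apply_eq_apply_mod_right (hq : HasPeriods w h q a b) :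
    ∀ x < w, ∀ y < h, q x y = q x (y % b) := by
  intro x hx y hy
  rw [hq x hx y hy, hq x hx _ ((Nat.mod_le y b).trans_lt hy), Nat.mod_mod]

theorem HasPeriods.gcd {a' b' : ℕ} (hq : HasPeriods w h q a b) (hq' : HasPeriods w h q a' b')
    (ha : a ∣ w) (ha' : a' ∣ w) (hb : b ∣ h) (hb' : b' ∣ h) :
    HasPeriods w h q (Nat.gcd a a') (Nat.gcd b b') := by
  intro x hx y hy
  have horizontal : q x y = q (x % Nat.gcd a a') y :=
    forall_mod_gcd_eq (f := (q · y)) ha ha' (hq.apply_eq_apply_mod_left · · y hy)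
      (hq'.apply_eq_apply_mod_left · · y hy) x hx
  rw [horizontal]
  exact forall_mod_gcd_eq (f := q (x % Nat.gcd a a')) hb hb'
    (hq.apply_eq_apply_mod_right _ ((Nat.mod_le _ _).trans_lt hx))
    (hq'.apply_eq_apply_mod_right _ ((Nat.mod_le _ _).trans_lt hx)) y hy

namespace IsRoot

variable {w' h' : ℕ} {r : ℕ → ℕ → α}

theorem dvd_width (hr : IsRoot w' h' r w h q) : w' ∣ w := by
  obtain ⟨-, -, ⟨n, -, rfl⟩, -⟩ := hr
  exact dvd_mul_left _ _

theorem dvd_height (hr : IsRoot w' h' r w h q) : h' ∣ h := by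
  obtain ⟨-, -, -, ⟨m, -, rfl⟩, -⟩ := hr
  exact dvd_mul_left _ _

theorem width_le (hr : IsRoot w' h' r w h q) : w' ≤ w := by
  obtain ⟨-, -, ⟨n, hn, rfl⟩, -⟩ := hr
  exact Nat.le_mul_of_pos_left _ hn

theorem height_le (hr : IsRoot w' h' r w h q) : h' ≤ h := by
  obtain ⟨-, -, -, ⟨m, hm, rfl⟩, -⟩ := hr
  exact Nat.le_mul_of_pos_left _ hm

theorem apply_eq_of_lt (hr : IsRoot w' h' r w h q) {x y : ℕ} (hx : x < w') (hy : y < h') :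
    q x y = r x y := by
  rw [hr.2.2.2.2 x (hx.trans_le hr.width_le) y (hy.trans_le hr.height_le),
    Nat.mod_eq_of_lt hx, Nat.mod_eq_of_lt hy]

theorem hasPeriods (hr : IsRoot w' h' r w h q) : HasPeriods w h q w' h' := by
  intro x hx y hy
  rw [hr.apply_eq_of_lt (Nat.mod_lt x hr.1) (Nat.mod_lt y hr.2.1)]
  exact hr.2.2.2.2 x hx y hy

theorem isRoot_of_hasPeriods (hr : IsRoot w' h' r w h q) (hq : HasPeriods w h q a b)
    (ha : a ∣ w') (hb : b ∣ h') : IsRoot a b q w' h' r := by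
  refine ⟨Nat.pos_of_dvd_of_pos ha hr.1, Nat.pos_of_dvd_of_pos hb hr.2.1,
    exists_pos_mul_eq_of_dvd hr.1 ha, exists_pos_mul_eq_of_dvd hr.2.1 hb, fun x hx y hy => ?_⟩
  rw [← hr.apply_eq_of_lt hx hy]
  exact hq x (hx.trans_le hr.width_le) y (hy.trans_le hr.height_le)

end IsRoot

end Blocks

theorem stmt5 {α : Type*} (w h : ℕ) (q : ℕ → ℕ → α)
    (w1 h1 : ℕ) (r1 : ℕ → ℕ → α) (w2 h2 : ℕ) (r2 : ℕ → ℕ → α)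
    (h1root : IsRoot w1 h1 r1 w h q) (h2root : IsRoot w2 h2 r2 w h q) :
    ∃ (w' h' : ℕ) (r : ℕ → ℕ → α),
      IsRoot w' h' r w1 h1 r1 ∧ IsRoot w' h' r w2 h2 r2 := by
  have hgcd := h1root.hasPeriods.gcd h2root.hasPeriods h1root.dvd_width h2root.dvd_width
    h1root.dvd_height h2root.dvd_height
  exact ⟨_, _, q,
    h1root.isRoot_of_hasPeriods hgcd (Nat.gcd_dvd_left _ _) (Nat.gcd_dvd_left _ _),
    h2root.isRoot_of_hasPeriods hgcd (Nat.gcd_dvd_right _ _) (Nat.gcd_dvd_right _ _)⟩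
end

section
/- Let 𝐰 : ℤ² → Σ be an infinite picture admitting, for every n ∈ ℕ, a cover of width ≥ n and height ≥ n (i.e., 𝐰 is multi-scale coverable). Then the topological entropy of 𝐰 is zero: lim_{m→∞} (log c_𝐰(m,m))/m² = 0, where c_𝐰(m,m) is the number of distinct m×m blocks occurring in 𝐰. -/
/-- The block `q` of size `n × m` occurs in the picture `W : ℤ² → α` at `(a, b)`. -/
def OccAt {α : Type*} (W : ℤ → ℤ → α) (n m : ℕ) (q : ℕ → ℕ → α) (a b : ℤ) : Prop :=
  ∀ i < n, ∀ j < m, W (a + (i : ℤ)) (b + (j : ℤ)) = q i j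

/-- The block `q` of size `n × m` is a cover of the picture `W`:
every position of `ℤ²` lies inside an occurrence of `q`. -/
def Covers2 {α : Type*} (W : ℤ → ℤ → α) (n m : ℕ) (q : ℕ → ℕ → α) : Prop :=
  ∀ x y : ℤ, ∃ a b : ℤ, a ≤ x ∧ x < a + (n : ℤ) ∧ b ≤ y ∧ y < b + (m : ℤ) ∧
    OccAt W n m q a b

/-- `W` is multi-scale coverable: covers of arbitrarily large width and height. -/
def MSC {α : Type*} (W : ℤ → ℤ → α) : Prop :=
  ∀ n : ℕ, ∃ (nq mq : ℕ) (q : ℕ → ℕ → α), n ≤ nq ∧ n ≤ mq ∧ Covers2 W nq mq q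

/-- The number of distinct `m × m` blocks occurring in `W`. -/
noncomputable def complexity {α : Type*} (W : ℤ → ℤ → α) (m : ℕ) : ℕ :=
  Set.ncard {f : Fin m → Fin m → α |
    ∃ a b : ℤ, ∀ i j : Fin m, f i j = W (a + (i : ℤ)) (b + (j : ℤ))}

namespace Stmt6Aux

open scoped Classical

variable {α : Type*}

/-- horizontal positions of occurrences whose vertical span contains `y`. -/
def Ay (W : ℤ → ℤ → α) (n₁ n₂ : ℕ) (q : ℕ → ℕ → α) (y a : ℤ) : Prop :=
  ∃ b : ℤ, b ≤ y ∧ y < b + (n₂ : ℤ) ∧ OccAt W n₁ n₂ q a b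

variable {W : ℤ → ℤ → α} {n₁ n₂ : ℕ} {q : ℕ → ℕ → α}

lemma exists_greatest (hcov : Covers2 W n₁ n₂ q) (y x : ℤ) :
    ∃ a : ℤ, (Ay W n₁ n₂ q y a ∧ x - (n₁ : ℤ) < a ∧ a ≤ x) ∧
      ∀ z : ℤ, (Ay W n₁ n₂ q y z ∧ x - (n₁ : ℤ) < z ∧ z ≤ x) → z ≤ a := by
  apply Int.exists_greatest_of_bdd ⟨x, fun z hz => hz.2.2⟩
  obtain ⟨a, b, h1, h2, h3, h4, h5⟩ := hcov x y
  exact ⟨a, ⟨b, h3, h4, h5⟩, by linarith, h1⟩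

noncomputable def ga (hcov : Covers2 W n₁ n₂ q) (y x : ℤ) : ℤ :=
  (exists_greatest hcov y x).choose

lemma ga_Ay (hcov : Covers2 W n₁ n₂ q) (y x : ℤ) : Ay W n₁ n₂ q y (ga hcov y x) :=
  (exists_greatest hcov y x).choose_spec.1.1

lemma ga_gt (hcov : Covers2 W n₁ n₂ q) (y x : ℤ) : x - (n₁ : ℤ) < ga hcov y x :=
  (exists_greatest hcov y x).choose_spec.1.2.1

lemma ga_le (hcov : Covers2 W n₁ n₂ q) (y x : ℤ) : ga hcov y x ≤ x :=
  (exists_greatest hcov y x).choose_spec.1.2.2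

lemma ga_max (hcov : Covers2 W n₁ n₂ q) (y x z : ℤ) (h1 : Ay W n₁ n₂ q y z)
    (h2 : x - (n₁ : ℤ) < z) (h3 : z ≤ x) : z ≤ ga hcov y x :=
  (exists_greatest hcov y x).choose_spec.2 z ⟨h1, h2, h3⟩

noncomputable def gb (hcov : Covers2 W n₁ n₂ q) (y x : ℤ) : ℤ :=
  (ga_Ay hcov y x).choose

lemma gb_le (hcov : Covers2 W n₁ n₂ q) (y x : ℤ) : gb hcov y x ≤ y :=
  (ga_Ay hcov y x).choose_spec.1

lemma gb_gt (hcov : Covers2 W n₁ n₂ q) (y x : ℤ) : y < gb hcov y x + (n₂ : ℤ) :=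
  (ga_Ay hcov y x).choose_spec.2.1

lemma gb_occ (hcov : Covers2 W n₁ n₂ q) (y x : ℤ) :
    OccAt W n₁ n₂ q (ga hcov y x) (gb hcov y x) :=
  (ga_Ay hcov y x).choose_spec.2.2

noncomputable def X (hcov : Covers2 W n₁ n₂ q) (y A : ℤ) : ℕ → ℤ
  | 0 => A
  | k + 1 => ga hcov y (X hcov y A k) + (n₁ : ℤ)

lemma X_succ (hcov : Covers2 W n₁ n₂ q) (y A : ℤ) (k : ℕ) :
    X hcov y A (k + 1) = ga hcov y (X hcov y A k) + (n₁ : ℤ) := rfl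

lemma ga_ga (hcov : Covers2 W n₁ n₂ q) (y x : ℤ) :
    x < ga hcov y (ga hcov y x + (n₁ : ℤ)) := by
  have h1 : x - (n₁ : ℤ) < ga hcov y x := ga_gt hcov y x
  have h2 : (ga hcov y x + (n₁ : ℤ)) - (n₁ : ℤ) < ga hcov y (ga hcov y x + (n₁ : ℤ)) :=
    ga_gt hcov y (ga hcov y x + (n₁ : ℤ))
  have h2' := ga_Ay hcov y (ga hcov y x + (n₁ : ℤ))
  by_contra h
  push_neg at h
  have := ga_max hcov y x _ h2' (by linarith) h
  linarith

lemma X_pair (hcov : Covers2 W n₁ n₂ q) (y A : ℤ) (k : ℕ) :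
    X hcov y A (k + 1) + (n₁ : ℤ) < X hcov y A (k + 3) := by
  have hx2 : X hcov y A (k + 2) = ga hcov y (X hcov y A (k + 1)) + (n₁ : ℤ) := rfl
  have hx3 : X hcov y A (k + 3) = ga hcov y (X hcov y A (k + 2)) + (n₁ : ℤ) := rfl
  rw [hx3, hx2]
  have := ga_ga hcov y (X hcov y A (k + 1))
  linarith

lemma X_growth (hcov : Covers2 W n₁ n₂ q) (y A : ℤ) (j : ℕ) :
    A + 1 + (j : ℤ) * (n₁ : ℤ) ≤ X hcov y A (2 * j + 1) := by
  induction j with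
  | zero =>
    have h : A - (n₁ : ℤ) < ga hcov y A := ga_gt hcov y A
    have hx : X hcov y A 1 = ga hcov y A + (n₁ : ℤ) := rfl
    rw [hx]
    push_cast
    linarith
  | succ j ih =>
    have hpair := X_pair hcov y A (2 * j)
    have hidx : 2 * (j + 1) + 1 = 2 * j + 3 := by ring
    rw [hidx]
    push_cast
    push_cast at ih
    linarith

lemma X_reach (hcov : Covers2 W n₁ n₂ q) (y A : ℤ) (m : ℕ) (h1 : 0 < n₁) :
    (A + (m : ℤ)) < X hcov y A (2 * (m / n₁) + 3) := by
  have hg := X_growth hcov y A (m / n₁ + 1)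
  have hidx : 2 * (m / n₁ + 1) + 1 = 2 * (m / n₁) + 3 := by ring
  rw [hidx] at hg
  have hdm : n₁ * (m / n₁) + m % n₁ = m := Nat.div_add_mod m n₁
  have hmod : m % n₁ < n₁ := Nat.mod_lt _ h1
  have h2n : m < n₁ * (m / n₁) + n₁ := by
    conv_lhs => rw [← hdm]
    exact Nat.add_lt_add_left hmod _
  have h2 : ((m : ℤ)) < (n₁ : ℤ) * ((m / n₁ : ℕ) : ℤ) + (n₁ : ℤ) := by exact_mod_cast h2n
  push_cast at hg
  nlinarith

/-- decoder-side position sequence computed from recorded offsets -/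
def Xi (n₁ : ℕ) (d : ℕ → ℕ) : ℕ → ℤ
  | 0 => 0
  | k + 1 => Xi n₁ d k - (d k : ℤ) + (n₁ : ℤ)

lemma Xi_congr (n₁ : ℕ) (d d' : ℕ → ℕ) (l : ℕ) (h : ∀ k < l, d k = d' k) :
    Xi n₁ d l = Xi n₁ d' l := by
  induction l with
  | zero => rfl
  | succ l ih =>
    have h1 : Xi n₁ d (l + 1) = Xi n₁ d l - (d l : ℤ) + (n₁ : ℤ) := rfl
    have h2 : Xi n₁ d' (l + 1) = Xi n₁ d' l - (d' l : ℤ) + (n₁ : ℤ) := rfl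
    rw [h1, h2, ih (fun k hk => h k (by omega)), h l (by omega)]

/-- offsets recorded by the greedy procedure -/
noncomputable def del (hcov : Covers2 W n₁ n₂ q) (y A : ℤ) (k : ℕ) : ℕ :=
  (X hcov y A k - ga hcov y (X hcov y A k)).toNat

lemma Xi_del (hcov : Covers2 W n₁ n₂ q) (y A : ℤ) (k : ℕ) :
    Xi n₁ (del hcov y A) k = X hcov y A k - A := by
  induction k with
  | zero => simp [Xi, X]
  | succ k ih =>
    have h1 : Xi n₁ (del hcov y A) (k + 1)
        = Xi n₁ (del hcov y A) k - (del hcov y A k : ℤ) + (n₁ : ℤ) := rfl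
    have h2 : X hcov y A (k + 1) = ga hcov y (X hcov y A k) + (n₁ : ℤ) := rfl
    have h3 : ((del hcov y A k : ℕ) : ℤ) = X hcov y A k - ga hcov y (X hcov y A k) := by
      rw [del]
      exact Int.toNat_of_nonneg (by have := ga_le hcov y (X hcov y A k); linarith)
    rw [h1, h2, ih, h3]
    ring

/-- the raw (unbounded) encoding of a block -/
noncomputable def encN (hcov : Covers2 W n₁ n₂ q) (m : ℕ) (f : Fin m → Fin m → α)
    (j k : ℕ) : ℕ × ℕ :=
  if hf : ∃ a b : ℤ, ∀ i j' : Fin m, f i j' = W (a + (i : ℤ)) (b + (j' : ℤ)) then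
    ((X hcov (hf.choose_spec.choose + (j : ℤ)) hf.choose k
        - ga hcov (hf.choose_spec.choose + (j : ℤ))
            (X hcov (hf.choose_spec.choose + (j : ℤ)) hf.choose k)).toNat,
     ((hf.choose_spec.choose + (j : ℤ))
        - gb hcov (hf.choose_spec.choose + (j : ℤ))
            (X hcov (hf.choose_spec.choose + (j : ℤ)) hf.choose k)).toNat)
  else (0, 0)

lemma encN_lt (hcov : Covers2 W n₁ n₂ q) (h1 : 0 < n₁) (h2 : 0 < n₂) (m : ℕ)
    (f : Fin m → Fin m → α) (j k : ℕ) :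
    (encN hcov m f j k).1 < n₁ ∧ (encN hcov m f j k).2 < n₂ := by
  rw [encN]
  split
  · next hf =>
    set y := hf.choose_spec.choose + (j : ℤ)
    set x := X hcov y hf.choose k
    have g1 := ga_gt hcov y x
    have g2 := ga_le hcov y x
    have g3 := gb_le hcov y x
    have g4 := gb_gt hcov y x
    constructor <;> simp only <;> omega
  · simpa using ⟨h1, h2⟩

/-- the truncated encoding -/
noncomputable def Etr (hcov : Covers2 W n₁ n₂ q) (h1 : 0 < n₁) (h2 : 0 < n₂)
    (m T : ℕ) (f : Fin m → Fin m → α) : Fin m → Fin T → Fin n₁ × Fin n₂ :=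
  fun j k =>
    (⟨(encN hcov m f (j : ℕ) (k : ℕ)).1, (encN_lt hcov h1 h2 m f j k).1⟩,
     ⟨(encN hcov m f (j : ℕ) (k : ℕ)).2, (encN_lt hcov h1 h2 m f j k).2⟩)

/-- first components of a truncated encoding, extended by zero -/
def dfun {n₁ n₂ : ℕ} (m T : ℕ) (e : Fin m → Fin T → Fin n₁ × Fin n₂) (j k : ℕ) : ℕ :=
  if h : j < m ∧ k < T then ((e ⟨j, h.1⟩ ⟨k, h.2⟩).1 : ℕ) else 0

/-- second components of a truncated encoding, extended by zero -/
def d2fun {n₁ n₂ : ℕ} (m T : ℕ) (e : Fin m → Fin T → Fin n₁ × Fin n₂) (j k : ℕ) : ℕ :=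
  if h : j < m ∧ k < T then ((e ⟨j, h.1⟩ ⟨k, h.2⟩).2 : ℕ) else 0

/-- the decoder: reconstructs a block entry from the truncated encoding alone -/
noncomputable def dec (q : ℕ → ℕ → α) {n₁ n₂ : ℕ} (m T : ℕ)
    (e : Fin m → Fin T → Fin n₁ × Fin n₂) (i j : ℕ) : α :=
  if h : ∃ k, (i : ℤ) < Xi n₁ (dfun m T e j) (k + 1) then
    q (((i : ℤ) - Xi n₁ (dfun m T e j) (Nat.find h)).toNat + dfun m T e j (Nat.find h))
      (d2fun m T e j (Nat.find h))
  else q 0 0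


theorem dec_Etr (hcov : Covers2 W n₁ n₂ q) (h1 : 0 < n₁) (h2 : 0 < n₂) (m : ℕ)
    (f : Fin m → Fin m → α)
    (hf : ∃ a b : ℤ, ∀ i j' : Fin m, f i j' = W (a + (i : ℤ)) (b + (j' : ℤ)))
    (i j : ℕ) (hi : i < m) (hj : j < m) :
    dec q m (2 * (m / n₁) + 3) (Etr hcov h1 h2 m (2 * (m / n₁) + 3) f) i j
      = f ⟨i, hi⟩ ⟨j, hj⟩ := by
  set T := 2 * (m / n₁) + 3 with hT
  set A := hf.choose with hA
  set B := hf.choose_spec.choose with hB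
  have hfspec : ∀ i' j' : Fin m, f i' j' = W (A + (i' : ℤ)) (B + (j' : ℤ)) :=
    hf.choose_spec.choose_spec
  set y := B + (j : ℤ) with hy
  set e := Etr hcov h1 h2 m T f with he
  have hd : ∀ k, k < T → dfun m T e j k = del hcov y A k := by
    intro k hk
    rw [dfun, dif_pos ⟨hj, hk⟩]
    simp only [he, Etr]
    rw [encN, dif_pos hf, del]
  have hXi : ∀ l, l ≤ T → Xi n₁ (dfun m T e j) l = X hcov y A l - A := by
    intro l hl
    rw [Xi_congr n₁ _ (del hcov y A) l (fun k hk => hd k (lt_of_lt_of_le hk hl)),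
      Xi_del]
  have hwit : (i : ℤ) < Xi n₁ (dfun m T e j) ((T - 1) + 1) := by
    have hT1 : T - 1 + 1 = T := by omega
    rw [hT1, hXi T le_rfl]
    have hreach : (A + (m : ℤ)) < X hcov y A T := X_reach hcov y A m h1
    have him : (i : ℤ) < (m : ℤ) := by exact_mod_cast hi
    linarith
  have hex : ∃ k, (i : ℤ) < Xi n₁ (dfun m T e j) (k + 1) := ⟨T - 1, hwit⟩
  rw [dec, dif_pos hex]
  set k₀ := Nat.find hex with hk₀def
  have hup : (i : ℤ) < Xi n₁ (dfun m T e j) (k₀ + 1) := Nat.find_spec hex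
  have hk₀le : k₀ ≤ T - 1 := Nat.find_le hwit
  have hk₀T : k₀ < T := by omega
  have hlow : Xi n₁ (dfun m T e j) k₀ ≤ (i : ℤ) := by
    rcases Nat.eq_zero_or_pos k₀ with h0 | h0
    · rw [h0]
      show (0 : ℤ) ≤ (i : ℤ)
      exact Int.natCast_nonneg i
    · have hmin := Nat.find_min hex (m := k₀ - 1) (by omega)
      push_neg at hmin
      have hE : k₀ - 1 + 1 = k₀ := by omega
      rwa [hE] at hmin
  rw [hXi k₀ (by omega)] at hlow
  rw [hXi (k₀ + 1) (by omega)] at hup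
  set x := X hcov y A k₀ with hx
  have hXsucc : X hcov y A (k₀ + 1) = ga hcov y x + (n₁ : ℤ) := rfl
  rw [hXsucc] at hup
  set a := ga hcov y x with ha
  set b := gb hcov y x with hb
  have hax : a ≤ x := ga_le hcov y x
  have hagt : x - (n₁ : ℤ) < a := ga_gt hcov y x
  have hble : b ≤ y := gb_le hcov y x
  have hbgt : y < b + (n₂ : ℤ) := gb_gt hcov y x
  have hocc : OccAt W n₁ n₂ q a b := gb_occ hcov y x
  have hu_lt : (A + (i : ℤ) - a).toNat < n₁ := by omega
  have hv_lt : (y - b).toNat < n₂ := by omega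
  have hW := hocc ((A + (i : ℤ) - a).toNat) hu_lt ((y - b).toNat) hv_lt
  have e1 : a + (((A + (i : ℤ) - a).toNat : ℕ) : ℤ) = A + (i : ℤ) := by omega
  have e2 : b + (((y - b).toNat : ℕ) : ℤ) = y := by omega
  rw [e1, e2] at hW
  have hfv : f ⟨i, hi⟩ ⟨j, hj⟩ = W (A + (i : ℤ)) y := by
    have h := hfspec ⟨i, hi⟩ ⟨j, hj⟩
    rw [hy]
    simpa using h
  have harg1 : ((i : ℤ) - Xi n₁ (dfun m T e j) k₀).toNat + dfun m T e j k₀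
      = (A + (i : ℤ) - a).toNat := by
    rw [hXi k₀ (by omega), hd k₀ hk₀T, del, ← hx]
    omega
  have harg2 : d2fun m T e j k₀ = (y - b).toNat := by
    rw [d2fun, dif_pos ⟨hj, hk₀T⟩]
    simp only [he, Etr]
    rw [encN, dif_pos hf]
  rw [hfv, harg1, harg2]
  exact hW.symm


theorem complexity_le (hcov : Covers2 W n₁ n₂ q) (h1 : 0 < n₁) (h2 : 0 < n₂) (m : ℕ) :
    complexity W m ≤ (n₁ * n₂) ^ ((2 * (m / n₁) + 3) * m) := by
  classical
  set T := 2 * (m / n₁) + 3 with hT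
  rw [complexity]
  have hinj : Set.InjOn (Etr hcov h1 h2 m T)
      {f : Fin m → Fin m → α |
        ∃ a b : ℤ, ∀ i j : Fin m, f i j = W (a + (i : ℤ)) (b + (j : ℤ))} := by
    intro f hf g hg he
    funext i' j'
    have hf' : ∃ a b : ℤ, ∀ i j' : Fin m, f i j' = W (a + (i : ℤ)) (b + (j' : ℤ)) := hf
    have hg' : ∃ a b : ℤ, ∀ i j' : Fin m, g i j' = W (a + (i : ℤ)) (b + (j' : ℤ)) := hg
    have hh1 := dec_Etr hcov h1 h2 m f hf' i' j' i'.2 j'.2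
    have hh2 := dec_Etr hcov h1 h2 m g hg' i' j' i'.2 j'.2
    rw [he] at hh1
    rw [hh2] at hh1
    simpa using hh1.symm
  have hcard := Set.ncard_le_ncard_of_injOn (Etr hcov h1 h2 m T)
    (fun f _ => Set.mem_univ _) hinj Set.finite_univ
  refine hcard.trans ?_
  rw [Set.ncard_univ, Nat.card_eq_fintype_card]
  rw [Fintype.card_fun, Fintype.card_fun, Fintype.card_prod, Fintype.card_fin,
    Fintype.card_fin, Fintype.card_fin, Fintype.card_fin, ← pow_mul]

/-- transpose of a picture -/
def trW (W : ℤ → ℤ → α) : ℤ → ℤ → α := fun x y => W y x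

/-- transpose of a block -/
def trq (q : ℕ → ℕ → α) : ℕ → ℕ → α := fun i j => q j i

lemma covers_tr (hcov : Covers2 W n₁ n₂ q) : Covers2 (trW W) n₂ n₁ (trq q) := by
  intro x y
  obtain ⟨a, b, ha1, ha2, hb1, hb2, hocc⟩ := hcov y x
  exact ⟨b, a, hb1, hb2, ha1, ha2, fun i hi j hj => hocc j hj i hi⟩

lemma complexity_tr_le [Fintype α] (W : ℤ → ℤ → α) (m : ℕ) :
    complexity (trW W) m ≤ complexity W m := by
  rw [complexity, complexity]
  apply Set.ncard_le_ncard_of_injOn (fun f => fun i j => f j i)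
  · rintro f ⟨a, b, hab⟩
    exact ⟨b, a, fun i j => hab j i⟩
  · intro f _ g _ h
    funext i j
    exact congrFun (congrFun h j) i

lemma complexity_tr [Fintype α] (W : ℤ → ℤ → α) (m : ℕ) :
    complexity (trW W) m = complexity W m := by
  exact le_antisymm (complexity_tr_le W m) (complexity_tr_le (trW W) m)

theorem complexity_le' [Fintype α] (hcov : Covers2 W n₁ n₂ q) (h1 : 0 < n₁)
    (h2 : 0 < n₂) (m : ℕ) :
    complexity W m ≤ (n₁ * n₂) ^ ((2 * (m / n₂) + 3) * m) := by
  have := complexity_le (covers_tr hcov) h2 h1 m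
  rw [complexity_tr] at this
  rwa [mul_comm (n₂ : ℕ) n₁] at this


lemma one_le_complexity [Fintype α] (W : ℤ → ℤ → α) (m : ℕ) :
    1 ≤ complexity W m := by
  rw [complexity]
  have hne : {f : Fin m → Fin m → α |
      ∃ a b : ℤ, ∀ i j : Fin m, f i j = W (a + (i : ℤ)) (b + (j : ℤ))}.Nonempty :=
    ⟨fun i j => W ((0 : ℤ) + (i : ℤ)) ((0 : ℤ) + (j : ℤ)), 0, 0, fun _ _ => rfl⟩
  exact (Set.ncard_pos (Set.toFinite _)).mpr hne

end Stmt6Aux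

theorem stmt6 {α : Type*} [Fintype α] (W : ℤ → ℤ → α) (hmsc : MSC W) :
    Filter.Tendsto (fun m : ℕ => Real.log (complexity W m) / (m : ℝ) ^ 2)
      Filter.atTop (nhds 0) := by
  rw [Metric.tendsto_atTop]
  intro ε hε
  have hlog : Filter.Tendsto (fun x : ℝ => Real.log x / x) Filter.atTop (nhds 0) :=
    Real.isLittleO_log_id_atTop.tendsto_div_nhds_zero
  obtain ⟨C, hC⟩ := Metric.tendsto_atTop.mp hlog (ε / 8) (by linarith)
  obtain ⟨n₁, n₂, q, hn₁, hn₂, hcov⟩ := hmsc (max 3 ⌈C⌉₊)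
  set M := max n₁ n₂ with hM
  have h1 : 0 < n₁ := by omega
  have h2 : 0 < n₂ := by omega
  have hM3 : 3 ≤ M := le_trans (le_trans (le_max_left 3 ⌈C⌉₊) hn₁) (le_max_left n₁ n₂)
  have hMC : C ≤ (M : ℝ) := by
    have h₁ : ⌈C⌉₊ ≤ M := le_trans (le_trans (le_max_right 3 ⌈C⌉₊) hn₁) (le_max_left n₁ n₂)
    calc C ≤ (⌈C⌉₊ : ℝ) := Nat.le_ceil C
    _ ≤ (M : ℝ) := by exact_mod_cast h₁
  have hMpos : (0 : ℝ) < M := by positivity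
  have hlogM0 : 0 ≤ Real.log M := Real.log_natCast_nonneg M
  have hMlog : Real.log M / M < ε / 8 := by
    have := hC (M : ℝ) hMC
    rw [Real.dist_eq, sub_zero, abs_of_nonneg (by positivity)] at this
    exact this
  -- the complexity bound
  have hcomp : ∀ m : ℕ, complexity W m ≤ (n₁ * n₂) ^ ((2 * (m / M) + 3) * m) := by
    intro m
    rcases le_total n₂ n₁ with hle | hle
    · have : M = n₁ := max_eq_left hle
      rw [this]
      exact Stmt6Aux.complexity_le hcov h1 h2 m
    · have : M = n₂ := max_eq_right hle
      rw [this]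
      exact Stmt6Aux.complexity_le' hcov h1 h2 m
  refine ⟨⌈12 * Real.log M / ε⌉₊ + 1, fun m hm => ?_⟩
  have hm1 : 1 ≤ m := by omega
  have hmpos : (0 : ℝ) < m := by exact_mod_cast hm1
  have hcm : 1 ≤ complexity W m := Stmt6Aux.one_le_complexity W m
  have hcm' : (1 : ℝ) ≤ (complexity W m : ℝ) := by exact_mod_cast hcm
  -- log bound
  have hlogc : Real.log (complexity W m)
      ≤ (((2 * (m / M) + 3) * m : ℕ) : ℝ) * Real.log ((n₁ : ℝ) * (n₂ : ℝ)) := by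
    calc Real.log (complexity W m)
        ≤ Real.log (((n₁ * n₂) ^ ((2 * (m / M) + 3) * m) : ℕ) : ℝ) := by
          apply Real.log_le_log (by linarith)
          exact_mod_cast hcomp m
    _ = (((2 * (m / M) + 3) * m : ℕ) : ℝ) * Real.log ((n₁ : ℝ) * (n₂ : ℝ)) := by
          rw [Nat.cast_pow, Real.log_pow]
          push_cast
          ring
  have hlognn : Real.log ((n₁ : ℝ) * (n₂ : ℝ)) ≤ 2 * Real.log M := by
    have hn₁M : (n₁ : ℝ) ≤ (M : ℝ) := by exact_mod_cast le_max_left n₁ n₂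
    have hn₂M : (n₂ : ℝ) ≤ (M : ℝ) := by exact_mod_cast le_max_right n₁ n₂
    have l1 : Real.log (n₁ : ℝ) ≤ Real.log M := Real.log_le_log (by positivity) hn₁M
    have l2 : Real.log (n₂ : ℝ) ≤ Real.log M := Real.log_le_log (by positivity) hn₂M
    rw [Real.log_mul (by positivity) (by positivity)]
    linarith
  have hdiv : ((m / M : ℕ) : ℝ) ≤ (m : ℝ) / (M : ℝ) := Nat.cast_div_le
  have e3 : Real.log (complexity W m)
      ≤ (2 * ((m : ℝ) / M) + 3) * m * (2 * Real.log M) := by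
    calc Real.log (complexity W m)
        ≤ (((2 * (m / M) + 3) * m : ℕ) : ℝ) * Real.log ((n₁ : ℝ) * (n₂ : ℝ)) := hlogc
    _ ≤ (((2 * (m / M) + 3) * m : ℕ) : ℝ) * (2 * Real.log M) := by
          apply mul_le_mul_of_nonneg_left hlognn (by positivity)
    _ ≤ (2 * ((m : ℝ) / M) + 3) * m * (2 * Real.log M) := by
          apply mul_le_mul_of_nonneg_right _ (by positivity)
          push_cast
          have : (0 : ℝ) ≤ (m : ℝ) := by positivity
          nlinarith [hdiv]
  have e4 : ((2 * ((m : ℝ) / M) + 3) * m * (2 * Real.log M)) / (m : ℝ) ^ 2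
      = 4 * (Real.log M / M) + 6 * Real.log M / m := by
    field_simp
    ring
  have hfinal : Real.log (complexity W m) / (m : ℝ) ^ 2
      ≤ 4 * (Real.log M / M) + 6 * Real.log M / m := by
    rw [← e4]
    apply div_le_div_of_nonneg_right e3 (by positivity)
  have hterm2 : 6 * Real.log M / m < ε / 2 := by
    have hmN : (⌈12 * Real.log M / ε⌉₊ : ℝ) + 1 ≤ (m : ℝ) := by exact_mod_cast hm
    have : 12 * Real.log M / ε < (m : ℝ) := by
      calc 12 * Real.log M / ε ≤ (⌈12 * Real.log M / ε⌉₊ : ℝ) := Nat.le_ceil _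
      _ < (m : ℝ) := by linarith
    rw [div_lt_iff₀ hmpos]
    rw [div_lt_iff₀ hε] at this
    nlinarith
  have hnn : 0 ≤ Real.log (complexity W m) / (m : ℝ) ^ 2 := by
    apply div_nonneg (Real.log_nonneg hcm') (by positivity)
  rw [Real.dist_eq, sub_zero, abs_of_nonneg hnn]
  calc Real.log (complexity W m) / (m : ℝ) ^ 2
      ≤ 4 * (Real.log M / M) + 6 * Real.log M / m := hfinal
  _ < 4 * (ε / 8) + ε / 2 := by
      apply add_lt_add_of_lt_of_lt _ hterm2  -- maybe wrong lemma name
      linarith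
  _ = ε := by ring
end

section
/- Let 𝐰 : ℤ² → Σ be an infinite picture that is covered by a block q of size n×m with n ≤ m. Then the number of distinct m×m square blocks occurring in 𝐰 is at most m^{4m}. -/
theorem stmt7 {α : Type*} (W : ℤ → ℤ → α) (n m : ℕ) (q : ℕ → ℕ → α)
    (hnm : n ≤ m) (hcov : Covers2 W n m q) :
    complexity W m ≤ m ^ (4 * m) := by
  classical
  obtain ⟨A0, B0, hA0, hA0', hB0, hB0', _⟩ := hcov 0 0
  have hn : 0 < n := by omega
  have hm : 0 < m := by omega
  set dec : (Fin m → Fin n × Fin m × Fin n × Fin m) → (Fin m → Fin m → α) :=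
    fun d i j =>
      if (d i).2.1.val + j.val < m then q (d i).1.val ((d i).2.1.val + j.val)
      else q (d i).2.2.1.val ((d i).2.2.2.val + (d i).2.1.val + j.val - m) with hdec
  have hsub : {f : Fin m → Fin m → α |
      ∃ a b : ℤ, ∀ i j : Fin m, f i j = W (a + (i : ℤ)) (b + (j : ℤ))} ⊆ Set.range dec := by
    rintro f ⟨x, y, hf⟩
    have key : ∀ i : Fin m, ∃ p : Fin n × Fin m × Fin n × Fin m,
        ∀ j : Fin m, f i j =
          if p.2.1.val + j.val < m then q p.1.val (p.2.1.val + j.val)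
          else q p.2.2.1.val (p.2.2.2.val + p.2.1.val + j.val - m) := by
      intro i
      obtain ⟨a0, b0, h1, h2, h3, h4, h5⟩ := hcov (x + (i : ℤ)) y
      obtain ⟨b1, ⟨hb1y, a1, ha1, ha1', hocc1⟩, hmax⟩ :=
        Int.exists_greatest_of_bdd
          (P := fun z => z ≤ y ∧ ∃ a, a ≤ x + (i : ℤ) ∧ x + (i : ℤ) < a + n ∧ OccAt W n m q a z)
          ⟨y, fun z hz => hz.1⟩ ⟨b0, h3, a0, h1, h2, h5⟩
      have hb1m : y < b1 + m := by
        have := hmax b0 ⟨h3, a0, h1, h2, h5⟩; omega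
      obtain ⟨a2, b2, g1, g2, g3, g4, hocc2⟩ := hcov (x + (i : ℤ)) (b1 + m)
      have hb2 : b1 < b2 := by omega
      have hb2y : y < b2 := by
        by_contra h
        push_neg at h
        have := hmax b2 ⟨h, a2, g1, g2, hocc2⟩
        omega
      refine ⟨⟨⟨(x + (i : ℤ) - a1).toNat, by omega⟩, ⟨(y - b1).toNat, by omega⟩,
        ⟨(x + (i : ℤ) - a2).toNat, by omega⟩, ⟨(b1 + m - b2).toNat, by omega⟩⟩, ?_⟩
      intro j
      have hj := j.isLt
      simp only
      by_cases hc : (y - b1).toNat + j.val < m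
      · rw [if_pos hc, hf i j]
        have h := hocc1 (x + (i : ℤ) - a1).toNat (by omega) ((y - b1).toNat + j.val) hc
        rw [show a1 + ((x + (i : ℤ) - a1).toNat : ℤ) = x + (i : ℤ) by omega,
          show b1 + (((y - b1).toNat + j.val : ℕ) : ℤ) = y + (j : ℤ) by omega] at h
        exact h
      · rw [if_neg hc, hf i j]
        have hlt : (b1 + m - b2).toNat + (y - b1).toNat + j.val - m < m := by omega
        have h := hocc2 (x + (i : ℤ) - a2).toNat (by omega)
          ((b1 + m - b2).toNat + (y - b1).toNat + j.val - m) hlt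
        rw [show a2 + ((x + (i : ℤ) - a2).toNat : ℤ) = x + (i : ℤ) by omega,
          show b2 + (((b1 + m - b2).toNat + (y - b1).toNat + j.val - m : ℕ) : ℤ) = y + (j : ℤ) by
            omega] at h
        exact h
    choose d hd using key
    exact ⟨d, funext fun i => funext fun j => (hd i j).symm⟩
  have h1 : complexity W m ≤ (Set.range dec).ncard := by
    unfold complexity
    exact Set.ncard_le_ncard hsub (Set.finite_range dec)
  have h2 : (Set.range dec).ncard ≤ Fintype.card (Fin m → Fin n × Fin m × Fin n × Fin m) := by
    rw [← Set.image_univ]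
    refine le_trans (Set.ncard_image_le Set.finite_univ) ?_
    rw [Set.ncard_univ, Nat.card_eq_fintype_card]
  have h3 : Fintype.card (Fin m → Fin n × Fin m × Fin n × Fin m) ≤ m ^ (4 * m) := by
    have hcard : Fintype.card (Fin m → Fin n × Fin m × Fin n × Fin m)
        = (n * (m * (n * m))) ^ m := by
      simp [Fintype.card_prod, Fintype.card_fin]
    rw [hcard]
    calc (n * (m * (n * m))) ^ m ≤ (m ^ 4) ^ m := by
          refine Nat.pow_le_pow_left ?_ m
          have : m ^ 4 = m * (m * (m * m)) := by ring
          rw [this]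
          exact Nat.mul_le_mul hnm (Nat.mul_le_mul_left m (Nat.mul_le_mul_right m hnm))
      _ = m ^ (4 * m) := (pow_mul m 4 m).symm
  omega
end

section
/- Let u be a finite block and v a finite block decomposed into pairwise disjoint blocks v₁,…,vₙ with width(vᵢ) > width(u) and height(vᵢ) > height(u) for all i. Then f_u(v) ≤ Σᵢ [ f_u(vᵢ)·|vᵢ|/|v| + (width(vᵢ)·height(u) + height(vᵢ)·width(u))/|v| ]. -/
/-- The rectangle with bottom-left corner `(a, b)`, width `w` and height `h`. -/
def Rect (a b : ℤ) (w h : ℕ) : Set (ℤ × ℤ) :=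
  {p | a ≤ p.1 ∧ p.1 < a + (w : ℤ) ∧ b ≤ p.2 ∧ p.2 < b + (h : ℤ)}

/-- The number of occurrences of the `uw × uh` block `u` (in the ambient
picture `W`) entirely contained in the region `D`. -/
noncomputable def occIn {α : Type*} (W : ℤ → ℤ → α) (uw uh : ℕ) (u : ℕ → ℕ → α)
    (D : Set (ℤ × ℤ)) : ℕ :=
  Set.ncard {p : ℤ × ℤ | ∀ i < uw, ∀ j < uh,
    W (p.1 + (i : ℤ)) (p.2 + (j : ℤ)) = u i j ∧ (p.1 + (i : ℤ), p.2 + (j : ℤ)) ∈ D}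

lemma rect_eq_coe (a b : ℤ) (w h : ℕ) :
    Rect a b w h = ↑(Finset.Ico a (a+(w:ℤ)) ×ˢ Finset.Ico b (b+(h:ℤ))) := by
  ext ⟨x, y⟩; simp [Rect, and_assoc]

lemma rect_finite (a b : ℤ) (w h : ℕ) : (Rect a b w h).Finite := by
  rw [rect_eq_coe]; exact (Finset.Ico a (a+(w:ℤ)) ×ˢ Finset.Ico b (b+(h:ℤ))).finite_toSet

lemma rect_ncard (a b : ℤ) (w h : ℕ) : (Rect a b w h).ncard = w * h := by
  rw [rect_eq_coe, Set.ncard_coe_finset, Finset.card_product, Int.card_Ico]; simp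

lemma ncard_iUnion_le {β : Type*} {n : ℕ} (s : Fin n → Set β) :
    (⋃ i, s i).ncard ≤ ∑ i, (s i).ncard := by
  induction n with
  | zero => simp
  | succ m ih =>
    have he : (⋃ i, s i) = s 0 ∪ ⋃ i : Fin m, s i.succ := by
      ext x; simp [Fin.exists_fin_succ]
    rw [he, Fin.sum_univ_succ]
    exact (Set.ncard_union_le _ _).trans (by gcongr; exact ih _)

/-- Main counting lemma. -/
lemma occ_le {α : Type*} (W : ℤ → ℤ → α) (uw uh : ℕ) (u : ℕ → ℕ → α)
    (a b : ℤ) (wd ht : ℕ)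
    (n : ℕ) (A B : Fin n → ℤ) (wi hi : Fin n → ℕ)
    (hw : ∀ i, uw < wi i) (hh : ∀ i, uh < hi i)
    (hunion : (⋃ i, Rect (A i) (B i) (wi i) (hi i)) = Rect a b wd ht) :
    occIn W uw uh u (Rect a b wd ht) ≤
      ∑ i : Fin n, (occIn W uw uh u (Rect (A i) (B i) (wi i) (hi i))
        + (wi i * uh + hi i * uw)) := by
  by_cases huw : uw = 0
  · have : {p : ℤ × ℤ | ∀ i < uw, ∀ j < uh,
        W (p.1 + (i : ℤ)) (p.2 + (j : ℤ)) = u i j ∧ (p.1 + (i : ℤ), p.2 + (j : ℤ)) ∈ Rect a b wd ht} = Set.univ := by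
      ext p; simp [huw]
    simp [occIn, this, Set.Infinite.ncard (Set.infinite_univ)]
  by_cases huh : uh = 0
  · have : {p : ℤ × ℤ | ∀ i < uw, ∀ j < uh,
        W (p.1 + (i : ℤ)) (p.2 + (j : ℤ)) = u i j ∧ (p.1 + (i : ℤ), p.2 + (j : ℤ)) ∈ Rect a b wd ht} = Set.univ := by
      ext p; simp [huh]
    simp [occIn, this, Set.Infinite.ncard (Set.infinite_univ)]
  have huw1 : 1 ≤ uw := Nat.one_le_iff_ne_zero.2 huw
  have huh1 : 1 ≤ uh := Nat.one_le_iff_ne_zero.2 huh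
  -- occurrence set of a region
  set S : Set (ℤ × ℤ) → Set (ℤ × ℤ) := fun D =>
    {p : ℤ × ℤ | ∀ i < uw, ∀ j < uh,
      W (p.1 + (i : ℤ)) (p.2 + (j : ℤ)) = u i j ∧ (p.1 + (i : ℤ), p.2 + (j : ℤ)) ∈ D}
    with hS
  have hmemD : ∀ D p, p ∈ S D → p ∈ D := by
    intro D p hp
    have := (hp 0 (by omega) 0 (by omega)).2
    simpa using this
  -- the bad strips
  set V : Fin n → Set (ℤ × ℤ) := fun i =>
    Rect (A i + (wi i : ℤ) + 1 - uw) (B i) (uw - 1) (hi i) with hV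
  set H : Fin n → Set (ℤ × ℤ) := fun i =>
    Rect (A i) (B i + (hi i : ℤ) + 1 - uh) (wi i) (uh - 1) with hHdef
  have hsub : S (Rect a b wd ht) ⊆
      ⋃ i, (S (Rect (A i) (B i) (wi i) (hi i)) ∪ (V i ∪ H i)) := by
    intro p hp
    have hpD : p ∈ Rect a b wd ht := hmemD _ p hp
    rw [← hunion] at hpD
    obtain ⟨t, ⟨i, rfl⟩, hpi⟩ := hpD
    refine Set.mem_iUnion.2 ⟨i, ?_⟩
    obtain ⟨h1, h2, h3, h4⟩ := hpi
    by_cases hx : p.1 + (uw : ℤ) ≤ A i + wi i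
    · by_cases hy : p.2 + (uh : ℤ) ≤ B i + hi i
      · left
        intro i' hi' j' hj'
        refine ⟨(hp i' hi' j' hj').1, h1.trans (by omega), by push_cast; omega,
          h3.trans (by omega), by push_cast; omega⟩
      · right; right
        have hc : ((uh - 1 : ℕ) : ℤ) = (uh : ℤ) - 1 := by omega
        exact ⟨h1, h2, by omega, by rw [hc]; omega⟩
    · right; left
      have hc : ((uw - 1 : ℕ) : ℤ) = (uw : ℤ) - 1 := by omega
      exact ⟨by omega, by rw [hc]; omega, h3, h4⟩
  have hfin : ∀ i, (S (Rect (A i) (B i) (wi i) (hi i)) ∪ (V i ∪ H i)).Finite := by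
    intro i
    exact (((rect_finite _ _ _ _).subset (hmemD _)).union
      ((rect_finite _ _ _ _).union (rect_finite _ _ _ _)))
  calc occIn W uw uh u (Rect a b wd ht)
      ≤ (⋃ i, (S (Rect (A i) (B i) (wi i) (hi i)) ∪ (V i ∪ H i))).ncard := by
        refine Set.ncard_le_ncard hsub ?_
        exact Set.finite_iUnion hfin
    _ ≤ ∑ i, (S (Rect (A i) (B i) (wi i) (hi i)) ∪ (V i ∪ H i)).ncard := ncard_iUnion_le _
    _ ≤ ∑ i : Fin n, (occIn W uw uh u (Rect (A i) (B i) (wi i) (hi i))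
        + (wi i * uh + hi i * uw)) := by
        refine Finset.sum_le_sum fun i _ => ?_
        refine (Set.ncard_union_le _ _).trans ?_
        refine Nat.add_le_add le_rfl ?_
        refine (Set.ncard_union_le _ _).trans ?_
        rw [hV, hHdef]
        simp only [rect_ncard]
        have : (uw - 1) * hi i ≤ hi i * uw := by
          rw [Nat.mul_comm]; exact Nat.mul_le_mul_left _ (by omega)
        have h2 : wi i * (uh - 1) ≤ wi i * uh := Nat.mul_le_mul_left _ (by omega)
        omega

theorem stmt9 {α : Type*} (W : ℤ → ℤ → α) (uw uh : ℕ) (u : ℕ → ℕ → α)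
    (a b : ℤ) (wd ht : ℕ)
    (n : ℕ) (A B : Fin n → ℤ) (wi hi : Fin n → ℕ)
    (hw : ∀ i, uw < wi i) (hh : ∀ i, uh < hi i)
    (hdisj : ∀ i j, i ≠ j →
      Disjoint (Rect (A i) (B i) (wi i) (hi i)) (Rect (A j) (B j) (wi j) (hi j)))
    (hunion : (⋃ i, Rect (A i) (B i) (wi i) (hi i)) = Rect a b wd ht) :
    (occIn W uw uh u (Rect a b wd ht) : ℝ) / ((Rect a b wd ht).ncard : ℝ) ≤
      ∑ i : Fin n,
        (((occIn W uw uh u (Rect (A i) (B i) (wi i) (hi i)) : ℝ) /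
              ((Rect (A i) (B i) (wi i) (hi i)).ncard : ℝ)) *
            (((Rect (A i) (B i) (wi i) (hi i)).ncard : ℝ) /
              ((Rect a b wd ht).ncard : ℝ)) +
          ((wi i * uh + hi i * uw : ℕ) : ℝ) / ((Rect a b wd ht).ncard : ℝ)) := by
  have key := occ_le W uw uh u a b wd ht n A B wi hi hw hh hunion
  by_cases hN : ((Rect a b wd ht).ncard : ℝ) = 0
  · rw [hN]; simp
  · have hN' : (0:ℝ) < ((Rect a b wd ht).ncard : ℝ) :=
      lt_of_le_of_ne (Nat.cast_nonneg _) (Ne.symm hN)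
    have hrw : ∀ i : Fin n,
        ((occIn W uw uh u (Rect (A i) (B i) (wi i) (hi i)) : ℝ) /
              ((Rect (A i) (B i) (wi i) (hi i)).ncard : ℝ)) *
            (((Rect (A i) (B i) (wi i) (hi i)).ncard : ℝ) /
              ((Rect a b wd ht).ncard : ℝ)) +
          ((wi i * uh + hi i * uw : ℕ) : ℝ) / ((Rect a b wd ht).ncard : ℝ)
        = ((occIn W uw uh u (Rect (A i) (B i) (wi i) (hi i))
            + (wi i * uh + hi i * uw) : ℕ) : ℝ) / ((Rect a b wd ht).ncard : ℝ) := by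
      intro i
      have hci : ((Rect (A i) (B i) (wi i) (hi i)).ncard : ℝ) ≠ 0 := by
        rw [rect_ncard]
        exact_mod_cast Nat.cast_ne_zero.2 (Nat.mul_ne_zero (by have := hw i; omega)
          (by have := hh i; omega))
      push_cast
      field_simp
    rw [Finset.sum_congr rfl (fun i _ => hrw i), ← Finset.sum_div]
    refine (div_le_div_iff_of_pos_right hN').2 ?_
    exact_mod_cast key
end

section
/- Every multi-scale coverable ℕ²-word is uniformly recurrent: if 𝐰 : ℕ² → Σ admits covers of arbitrarily large width and height (each cover occurring at the origin since covers must cover position (0,0) and occurrences lie in ℕ²), then for every k there exists ℓ such that every k×k block of 𝐰 occurs in every ℓ×ℓ block of 𝐰. -/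
/-- The block `q` of size `n × m` occurs in the ℕ²-word `W` at `(a, b)`. -/
def OccAtN {α : Type*} (W : ℕ → ℕ → α) (n m : ℕ) (q : ℕ → ℕ → α) (a b : ℕ) : Prop :=
  ∀ i < n, ∀ j < m, W (a + i) (b + j) = q i j

/-- The block `q` of size `n × m` covers the ℕ²-word `W`. -/
def CoversN {α : Type*} (W : ℕ → ℕ → α) (n m : ℕ) (q : ℕ → ℕ → α) : Prop :=
  ∀ x y : ℕ, ∃ a b : ℕ, a ≤ x ∧ x < a + n ∧ b ≤ y ∧ y < b + m ∧ OccAtN W n m q a b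

theorem stmt11 {α : Type*} (W : ℕ → ℕ → α)
    (hmsc : ∀ n : ℕ, ∃ (nq mq : ℕ) (q : ℕ → ℕ → α),
      n ≤ nq ∧ n ≤ mq ∧ CoversN W nq mq q) :
    ∀ k : ℕ, ∃ ℓ : ℕ, ∀ x y x' y' : ℕ, ∃ a b : ℕ,
      x' ≤ a ∧ a + k ≤ x' + ℓ ∧ y' ≤ b ∧ b + k ≤ y' + ℓ ∧
        ∀ i < k, ∀ j < k, W (a + i) (b + j) = W (x + i) (y + j) := by
  classical
  intro k
  -- Step 1: all values of W lie in a finite set F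
  obtain ⟨n0, m0, q0, hn0, hm0, hc0⟩ := hmsc 1
  set F : Finset α := (Finset.range n0 ×ˢ Finset.range m0).image (fun p => q0 p.1 p.2) with hFdef
  have hF : ∀ x y : ℕ, W x y ∈ F := by
    intro x y
    obtain ⟨a, b, hax, hxa, hby, hyb, hocc⟩ := hc0 x y
    have h1 : x - a < n0 := by omega
    have h2 : y - b < m0 := by omega
    have h3 := hocc (x - a) h1 (y - b) h2
    have h4 : a + (x - a) = x := by omega
    have h5 : b + (y - b) = y := by omega
    rw [h4, h5] at h3
    rw [h3]
    exact Finset.mem_image.2 ⟨(x - a, y - b),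
      Finset.mem_product.2 ⟨Finset.mem_range.2 h1, Finset.mem_range.2 h2⟩, rfl⟩
  -- Step 2: finitely many k×k blocks; get L s.t. every block occurs within [0,L]²
  let Φ : ℕ × ℕ → (Fin k × Fin k → F) := fun p ij =>
    ⟨W (p.1 + (ij.1 : ℕ)) (p.2 + (ij.2 : ℕ)), hF _ _⟩
  have hfin : (Set.range Φ).Finite := Set.toFinite _
  let g : (Fin k × Fin k → F) → ℕ × ℕ := fun f =>
    if h : f ∈ Set.range Φ then h.choose else (0, 0)
  have hg : ∀ p : ℕ × ℕ, Φ (g (Φ p)) = Φ p := by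
    intro p
    have h : Φ p ∈ Set.range Φ := ⟨p, rfl⟩
    simp only [g, dif_pos h]
    exact h.choose_spec
  let L : ℕ := hfin.toFinset.sup (fun f => (g f).1 ⊔ (g f).2)
  have hAll : ∀ x y : ℕ, ∃ x₀ y₀ : ℕ, x₀ ≤ L ∧ y₀ ≤ L ∧
      ∀ i < k, ∀ j < k, W (x₀ + i) (y₀ + j) = W (x + i) (y + j) := by
    intro x y
    refine ⟨(g (Φ (x, y))).1, (g (Φ (x, y))).2, ?_, ?_, ?_⟩
    · exact le_trans le_sup_left
        (Finset.le_sup (f := fun f => (g f).1 ⊔ (g f).2) (hfin.mem_toFinset.2 ⟨(x, y), rfl⟩))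
    · exact le_trans le_sup_right
        (Finset.le_sup (f := fun f => (g f).1 ⊔ (g f).2) (hfin.mem_toFinset.2 ⟨(x, y), rfl⟩))
    · intro i hi j hj
      have := congrFun (hg (x, y)) (⟨i, hi⟩, ⟨j, hj⟩)
      exact congrArg Subtype.val this
  -- Step 3: take a big cover, which occurs at origin and in every big window
  obtain ⟨n, m, q, hn, hm, hc⟩ := hmsc (L + k + 1)
  have h00 : ∀ i < n, ∀ j < m, W i j = q i j := by
    obtain ⟨a, b, ha, _, hb, _, hocc⟩ := hc 0 0
    have ha0 : a = 0 := by omega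
    have hb0 : b = 0 := by omega
    subst ha0; subst hb0
    intro i hi j hj
    have := hocc i hi j hj
    simpa using this
  refine ⟨2 * (n + m), ?_⟩
  intro x y x' y'
  obtain ⟨x₀, y₀, hx₀, hy₀, hblk⟩ := hAll x y
  obtain ⟨a, b, ha1, ha2, hb1, hb2, hocc⟩ := hc (x' + (n - 1)) (y' + (m - 1))
  refine ⟨a + x₀, b + y₀, by omega, by omega, by omega, by omega, ?_⟩
  intro i hi j hj
  have hxi : x₀ + i < n := by omega
  have hyj : y₀ + j < m := by omega
  have h1 : W (a + (x₀ + i)) (b + (y₀ + j)) = q (x₀ + i) (y₀ + j) := hocc _ hxi _ hyj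
  have h2 : W (x₀ + i) (y₀ + j) = q (x₀ + i) (y₀ + j) := h00 _ hxi _ hyj
  have h3 := hblk i hi j hj
  calc W (a + x₀ + i) (b + y₀ + j) = W (a + (x₀ + i)) (b + (y₀ + j)) := by
        rw [add_assoc, add_assoc]
    _ = q (x₀ + i) (y₀ + j) := h1
    _ = W (x₀ + i) (y₀ + j) := h2.symm
    _ = W (x + i) (y + j) := h3
end

section
/- An infinite picture 𝐰 : ℤ² → Σ is strongly multi-scale coverable if and only if it is multi-scale coverable and uniformly recurrent. -/
/-- `W` is uniformly recurrent: for all `k` there is `ℓ` such that every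
`k × k` block of `W` occurs in every `ℓ × ℓ` block of `W`. -/
def UR2 {α : Type*} (W : ℤ → ℤ → α) : Prop :=
  ∀ k : ℕ, ∃ ℓ : ℕ, ∀ x y x' y' : ℤ, ∃ a b : ℤ,
    x' ≤ a ∧ a + (k : ℤ) ≤ x' + (ℓ : ℤ) ∧ y' ≤ b ∧ b + (k : ℤ) ≤ y' + (ℓ : ℤ) ∧
      ∀ i < k, ∀ j < k, W (a + (i : ℤ)) (b + (j : ℤ)) = W (x + (i : ℤ)) (y + (j : ℤ))

/-- `W` is strongly multi-scale coverable: every block occurring in `W`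
occurs inside some cover of `W`. -/
def StrongMSC {α : Type*} (W : ℤ → ℤ → α) : Prop :=
  ∀ (k k' : ℕ) (x y : ℤ), ∃ (n m : ℕ) (q : ℕ → ℕ → α), Covers2 W n m q ∧
    ∃ a b : ℕ, a + k ≤ n ∧ b + k' ≤ m ∧
      ∀ i < k, ∀ j < k', q (a + i) (b + j) = W (x + (i : ℤ)) (y + (j : ℤ))

/-- Auxiliary: the `k × k` block of `W` at `(x, y)` as a function on `Fin k`. -/
def blockOf {α : Type*} (W : ℤ → ℤ → α) (k : ℕ) (x y : ℤ) : Fin k → Fin k → α :=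
  fun i j => W (x + ((i : ℕ) : ℤ)) (y + ((j : ℕ) : ℤ))

/-- Auxiliary: the block `B` occurs in every window of side `L`. -/
def RecBound {α : Type*} (W : ℤ → ℤ → α) (k : ℕ) (B : Fin k → Fin k → α) (L : ℕ) : Prop :=
  ∀ x' y' : ℤ, ∃ a b : ℤ, x' ≤ a ∧ a + (k : ℤ) ≤ x' + (L : ℤ) ∧ y' ≤ b ∧
    b + (k : ℤ) ≤ y' + (L : ℤ) ∧
    ∀ i j : Fin k, W (a + ((i : ℕ) : ℤ)) (b + ((j : ℕ) : ℤ)) = B i j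

lemma covers_pos {α : Type*} {W : ℤ → ℤ → α} {n m : ℕ} {q : ℕ → ℕ → α}
    (h : Covers2 W n m q) : 1 ≤ n ∧ 1 ≤ m := by
  obtain ⟨a, b, h1, h2, h3, h4, -⟩ := h 0 0
  omega

lemma recBound_mono {α : Type*} {W : ℤ → ℤ → α} {k : ℕ} {B : Fin k → Fin k → α} {L L' : ℕ}
    (h : RecBound W k B L) (hL : L ≤ L') : RecBound W k B L' := by
  intro x' y'
  obtain ⟨a, b, h1, h2, h3, h4, h5⟩ := h x' y'
  exact ⟨a, b, h1, by omega, h3, by omega, h5⟩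

lemma exists_recBound {α : Type*} {W : ℤ → ℤ → α} (h : StrongMSC W) (k : ℕ) (x y : ℤ) :
    ∃ L, RecBound W k (blockOf W k x y) L := by
  obtain ⟨n, m, q, hc, a0, b0, ha0, hb0, heq⟩ := h k k x y
  refine ⟨2 * (n + m), ?_⟩
  intro x' y'
  obtain ⟨A, B0, h1, h2, h3, h4, hocc⟩ := hc (x' + (n : ℤ) - 1) (y' + (m : ℤ) - 1)
  refine ⟨A + a0, B0 + b0, by omega, by omega, by omega, by omega, ?_⟩
  intro i j
  have hi : (i : ℕ) < k := i.isLt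
  have hj : (j : ℕ) < k := j.isLt
  have e1 := hocc (a0 + (i : ℕ)) (by omega) (b0 + (j : ℕ)) (by omega)
  have e2 := heq (i : ℕ) hi (j : ℕ) hj
  have hA : A + a0 + ((i : ℕ) : ℤ) = A + (((a0 + (i : ℕ) : ℕ)) : ℤ) := by push_cast; ring
  have hB : B0 + b0 + ((j : ℕ) : ℤ) = B0 + (((b0 + (j : ℕ) : ℕ)) : ℤ) := by push_cast; ring
  show W (A + a0 + ((i : ℕ) : ℤ)) (B0 + b0 + ((j : ℕ) : ℤ)) = blockOf W k x y i j
  rw [hA, hB, e1, e2]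
  rfl

theorem stmt12 {α : Type*} (W : ℤ → ℤ → α) :
    StrongMSC W ↔ MSC W ∧ UR2 W := by
  classical
  constructor
  · intro h
    have hmsc : MSC W := by
      intro n
      obtain ⟨N, M, q, hc, a0, b0, ha, hb, -⟩ := h n n 0 0
      exact ⟨N, M, q, by omega, by omega, hc⟩
    refine ⟨hmsc, ?_⟩
    intro k
    -- the alphabet of W is finite
    obtain ⟨n1, m1, q1, hc1, -⟩ := h 0 0 0 0
    set S : Set α := (fun p : ℕ × ℕ => q1 p.1 p.2) '' (Set.Iio n1 ×ˢ Set.Iio m1) with hSdef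
    have hSfin : S.Finite := ((Set.finite_Iio n1).prod (Set.finite_Iio m1)).image _
    have hWmem : ∀ x y : ℤ, W x y ∈ S := by
      intro x y
      obtain ⟨a, b, h1, h2, h3, h4, hocc⟩ := hc1 x y
      have hx : a + (((x - a).toNat : ℕ) : ℤ) = x := by omega
      have hy : b + (((y - b).toNat : ℕ) : ℤ) = y := by omega
      have := hocc (x - a).toNat (by omega) (y - b).toNat (by omega)
      rw [hx, hy] at this
      exact ⟨((x - a).toNat, (y - b).toNat), ⟨by simp; omega, by simp; omega⟩, this.symm⟩
    -- the set of k×k blocks of W is finite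
    have hF1 : ({g : Fin k → α | ∀ i, g i ∈ S}).Finite := by
      have : {g : Fin k → α | ∀ i, g i ∈ S} = Set.pi Set.univ (fun _ : Fin k => S) := by
        ext g; simp [Set.mem_pi]
      rw [this]
      exact Set.Finite.pi (fun _ => hSfin)
    have hF2 : ({f : Fin k → Fin k → α | ∀ i, f i ∈ {g : Fin k → α | ∀ i, g i ∈ S}}).Finite := by
      have : {f : Fin k → Fin k → α | ∀ i, f i ∈ {g : Fin k → α | ∀ i, g i ∈ S}} =
          Set.pi Set.univ (fun _ : Fin k => {g : Fin k → α | ∀ i, g i ∈ S}) := by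
        ext f; simp [Set.mem_pi]
      rw [this]
      exact Set.Finite.pi (fun _ => hF1)
    have hRfin : (Set.range (fun p : ℤ × ℤ => blockOf W k p.1 p.2)).Finite := by
      refine hF2.subset ?_
      rintro f ⟨⟨x, y⟩, rfl⟩
      intro i j
      exact hWmem _ _
    -- choose a recurrence bound for each block, take the sup
    set g : (Fin k → Fin k → α) → ℕ :=
      fun B => if hB : ∃ L, RecBound W k B L then hB.choose else 0 with hgdef
    have hg : ∀ x y : ℤ, RecBound W k (blockOf W k x y) (g (blockOf W k x y)) := by
      intro x y
      have hB := exists_recBound h k x y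
      rw [hgdef]
      simp only [dif_pos hB]
      exact hB.choose_spec
    refine ⟨hRfin.toFinset.sup g, ?_⟩
    intro x y x' y'
    have hle : g (blockOf W k x y) ≤ hRfin.toFinset.sup g :=
      Finset.le_sup (hRfin.mem_toFinset.2 ⟨(x, y), rfl⟩)
    obtain ⟨a, b, h1, h2, h3, h4, h5⟩ :=
      recBound_mono (hg x y) hle x' y'
    refine ⟨a, b, h1, h2, h3, h4, ?_⟩
    intro i hi j hj
    exact h5 ⟨i, hi⟩ ⟨j, hj⟩
  · rintro ⟨hmsc, hur⟩
    intro k k' x y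
    obtain ⟨ℓ, hℓ⟩ := hur (max k k')
    obtain ⟨n, m, q, hn, hm, hc⟩ := hmsc ℓ
    obtain ⟨A, B0, -, -, -, -, hocc⟩ := hc 0 0
    obtain ⟨a, b, h1, h2, h3, h4, heq⟩ := hℓ x y A B0
    have hk : k ≤ max k k' := le_max_left _ _
    have hk' : k' ≤ max k k' := le_max_right _ _
    refine ⟨n, m, q, hc, (a - A).toNat, (b - B0).toNat, by omega, by omega, ?_⟩
    intro i hi j hj
    have e1 := hocc ((a - A).toNat + i) (by omega) ((b - B0).toNat + j) (by omega)
    have e2 := heq i (by omega) j (by omega)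
    have hA : A + (((a - A).toNat + i : ℕ) : ℤ) = a + (i : ℤ) := by push_cast; omega
    have hB : B0 + (((b - B0).toNat + j : ℕ) : ℤ) = b + (j : ℤ) := by push_cast; omega
    rw [hA, hB] at e1
    rw [← e1]
    exact e2
end

section
/- If a multi-scale coverable picture 𝐰 has a block u such that the sequence (f_u(B_n)) of frequencies of u in the central (2n+1)×(2n+1) squares does not converge, then there exist ε > 0, t ∈ [0,1], an infinite set 𝒱 of blocks of 𝐰 containing blocks of arbitrarily large width and height, and an infinite set 𝒬 of covers of 𝐰 containing covers of arbitrarily large width and height, such that either f_u(v) < t − ε < t < f_u(q) for all q ∈ 𝒬, v ∈ 𝒱, or f_u(v) > t + ε > t > f_u(q) for all q ∈ 𝒬, v ∈ 𝒱. -/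
/-- Number of occurrences of the `uw × uh` block `u` entirely inside the
`w × h` rectangle of `W` with bottom-left corner `(a, b)`. -/
noncomputable def occCountRect {α : Type*} (W : ℤ → ℤ → α) (uw uh : ℕ)
    (u : ℕ → ℕ → α) (a b : ℤ) (w h : ℕ) : ℕ :=
  Set.ncard {p : ℤ × ℤ | a ≤ p.1 ∧ p.1 + (uw : ℤ) ≤ a + (w : ℤ) ∧
    b ≤ p.2 ∧ p.2 + (uh : ℤ) ≤ b + (h : ℤ) ∧
    ∀ i < uw, ∀ j < uh, W (p.1 + (i : ℤ)) (p.2 + (j : ℤ)) = u i j}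

/-- Frequency of `u` in the central `(2n+1) × (2n+1)` square `B_n` of `W`. -/
noncomputable def freqB {α : Type*} (W : ℤ → ℤ → α) (uw uh : ℕ)
    (u : ℕ → ℕ → α) (n : ℕ) : ℝ :=
  (occCountRect W uw uh u (-(n : ℤ)) (-(n : ℤ)) (2 * n + 1) (2 * n + 1) : ℝ) /
    (((2 * n + 1 : ℕ) : ℝ) ^ 2)

/-- A finite block, given as a width, a height, and its letters. -/
abbrev Blk (α : Type*) := ℕ × ℕ × (ℕ → ℕ → α)

/-- `B` is a block occurring in the picture `W`. -/
def IsBlockOf {α : Type*} (W : ℤ → ℤ → α) (B : Blk α) : Prop :=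
  ∃ x y : ℤ, ∀ i < B.1, ∀ j < B.2.1, B.2.2 i j = W (x + (i : ℤ)) (y + (j : ℤ))

/-- `B` is a cover of the picture `W`. -/
def IsCoverOf {α : Type*} (W : ℤ → ℤ → α) (B : Blk α) : Prop :=
  Covers2 W B.1 B.2.1 B.2.2

/-- Frequency `f_u(B)` of the `uw × uh` block `u` in the finite block `B`. -/
noncomputable def fublk {α : Type*} (uw uh : ℕ) (u : ℕ → ℕ → α) (B : Blk α) : ℝ :=
  (Set.ncard {p : ℕ × ℕ | p.1 + uw ≤ B.1 ∧ p.2 + uh ≤ B.2.1 ∧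
      ∀ i < uw, ∀ j < uh, B.2.2 (p.1 + i) (p.2 + j) = u i j} : ℝ) /
    ((B.1 * B.2.1 : ℕ) : ℝ)

section Helpers

open Filter

variable {α : Type*}

/-- The central block `B_n` as a `Blk`. -/
noncomputable def blkB (W : ℤ → ℤ → α) (n : ℕ) : Blk α :=
  (2 * n + 1, 2 * n + 1, fun i j => W (-(n : ℤ) + i) (-(n : ℤ) + j))

lemma fublk_nonneg (uw uh : ℕ) (u : ℕ → ℕ → α) (B : Blk α) :
    0 ≤ fublk uw uh u B :=
  div_nonneg (Nat.cast_nonneg _) (Nat.cast_nonneg _)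

lemma ncard_box (w h : ℕ) : Set.ncard {p : ℕ × ℕ | p.1 < w ∧ p.2 < h} = w * h := by
  have : {p : ℕ × ℕ | p.1 < w ∧ p.2 < h} = ↑(Finset.range w ×ˢ Finset.range h) := by
    ext p; simp [Finset.mem_product]
  rw [this, Set.ncard_coe_finset]
  simp

lemma fublk_le_one (uw uh : ℕ) (huw : 1 ≤ uw) (huh : 1 ≤ uh) (u : ℕ → ℕ → α) (B : Blk α) :
    fublk uw uh u B ≤ 1 := by
  obtain ⟨w, h, f⟩ := B
  unfold fublk
  rcases Nat.eq_zero_or_pos (w * h) with hwh | hwh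
  · simp [hwh]
  · rw [div_le_one (by exact_mod_cast hwh)]
    have hsub : {p : ℕ × ℕ | p.1 + uw ≤ w ∧ p.2 + uh ≤ h ∧
        ∀ i < uw, ∀ j < uh, f (p.1 + i) (p.2 + j) = u i j} ⊆
        {p : ℕ × ℕ | p.1 < w ∧ p.2 < h} := by
      rintro ⟨x, y⟩ ⟨h1, h2, _⟩; exact ⟨by omega, by omega⟩
    have hfin : ({p : ℕ × ℕ | p.1 < w ∧ p.2 < h}).Finite := by
      have : {p : ℕ × ℕ | p.1 < w ∧ p.2 < h} = ↑(Finset.range w ×ˢ Finset.range h) := by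
        ext p; simp [Finset.mem_product]
      rw [this]; exact (Finset.range w ×ˢ Finset.range h).finite_toSet
    have := Set.ncard_le_ncard hsub hfin
    rw [ncard_box] at this
    exact_mod_cast this

lemma freqB_nonneg (W : ℤ → ℤ → α) (uw uh : ℕ) (u : ℕ → ℕ → α) (n : ℕ) :
    0 ≤ freqB W uw uh u n :=
  div_nonneg (Nat.cast_nonneg _) (by positivity)

lemma fublk_blkB (W : ℤ → ℤ → α) (uw uh : ℕ) (u : ℕ → ℕ → α) (n : ℕ) :
    fublk uw uh u (blkB W n) = freqB W uw uh u n := by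
  unfold fublk freqB occCountRect blkB
  have key : {p : ℤ × ℤ | -(n : ℤ) ≤ p.1 ∧ p.1 + (uw : ℤ) ≤ -(n : ℤ) + ((2 * n + 1 : ℕ) : ℤ) ∧
      -(n : ℤ) ≤ p.2 ∧ p.2 + (uh : ℤ) ≤ -(n : ℤ) + ((2 * n + 1 : ℕ) : ℤ) ∧
      ∀ i < uw, ∀ j < uh, W (p.1 + (i : ℤ)) (p.2 + (j : ℤ)) = u i j} =
      (fun p : ℕ × ℕ => ((-(n : ℤ) + p.1, -(n : ℤ) + p.2) : ℤ × ℤ)) ''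
      {p : ℕ × ℕ | p.1 + uw ≤ 2 * n + 1 ∧ p.2 + uh ≤ 2 * n + 1 ∧
        ∀ i < uw, ∀ j < uh, W (-(n : ℤ) + ((p.1 + i : ℕ) : ℤ)) (-(n : ℤ) + ((p.2 + j : ℕ) : ℤ)) = u i j} := by
    ext ⟨x, y⟩
    constructor
    · rintro ⟨h1, h2, h3, h4, h5⟩
      refine ⟨((x + n).toNat, (y + n).toNat), ⟨by omega, by omega, ?_⟩, by simp; omega⟩
      intro i hi j hj
      have e1 : -(n : ℤ) + (((x + (n : ℤ)).toNat + i : ℕ) : ℤ) = x + (i : ℤ) := by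
        push_cast; omega
      have e2 : -(n : ℤ) + (((y + (n : ℤ)).toNat + j : ℕ) : ℤ) = y + (j : ℤ) := by
        push_cast; omega
      rw [e1, e2]; exact h5 i hi j hj
    · rintro ⟨⟨a, b⟩, ⟨h1, h2, h3⟩, heq⟩
      simp only [Prod.mk.injEq] at heq
      obtain ⟨hx, hy⟩ := heq
      refine ⟨by omega, by push_cast; omega, by omega, by push_cast; omega, ?_⟩
      intro i hi j hj
      have e1 : x + (i : ℤ) = -(n : ℤ) + ((a + i : ℕ) : ℤ) := by push_cast; omega
      have e2 : y + (j : ℤ) = -(n : ℤ) + ((b + j : ℕ) : ℤ) := by push_cast; omega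
      rw [e1, e2]; exact h3 i hi j hj
  rw [key, Set.ncard_image_of_injective _ (by
    intro p q h
    simp only [Prod.mk.injEq] at h
    have := h.1; have := h.2
    ext <;> omega)]
  congr 1
  push_cast
  ring

lemma freqB_le_one (W : ℤ → ℤ → α) (uw uh : ℕ) (huw : 1 ≤ uw) (huh : 1 ≤ uh)
    (u : ℕ → ℕ → α) (n : ℕ) : freqB W uw uh u n ≤ 1 := by
  rw [← fublk_blkB]
  exact fublk_le_one uw uh huw huh u _

/-- A set of blocks with arbitrarily large widths is infinite. -/
lemma infinite_of_unbounded_width {S : Set (Blk α)} (h : ∀ K : ℕ, ∃ B ∈ S, K ≤ B.1) :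
    S.Infinite := by
  intro hfin
  have hfin' : ((fun B : Blk α => B.1) '' S).Finite := hfin.image _
  obtain ⟨K, hK⟩ := hfin'.bddAbove
  obtain ⟨B, hB, hKB⟩ := h (K + 1)
  have : B.1 ≤ K := hK ⟨B, hB, rfl⟩
  omega

lemma occCountRect_degenerate (W : ℤ → ℤ → α) (uw uh : ℕ) (h0 : uw = 0 ∨ uh = 0)
    (u : ℕ → ℕ → α) (n : ℕ) (hn : uw + uh ≤ n) :
    occCountRect W uw uh u (-(n : ℤ)) (-(n : ℤ)) (2 * n + 1) (2 * n + 1) =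
      (2 * n + 2 - uw) * (2 * n + 2 - uh) := by
  unfold occCountRect
  have key : {p : ℤ × ℤ | -(n : ℤ) ≤ p.1 ∧ p.1 + (uw : ℤ) ≤ -(n : ℤ) + ((2 * n + 1 : ℕ) : ℤ) ∧
      -(n : ℤ) ≤ p.2 ∧ p.2 + (uh : ℤ) ≤ -(n : ℤ) + ((2 * n + 1 : ℕ) : ℤ) ∧
      ∀ i < uw, ∀ j < uh, W (p.1 + (i : ℤ)) (p.2 + (j : ℤ)) = u i j} =
      ↑(Finset.Icc (-(n : ℤ)) ((n : ℤ) + 1 - uw) ×ˢ Finset.Icc (-(n : ℤ)) ((n : ℤ) + 1 - uh)) := by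
    ext ⟨x, y⟩
    simp only [Set.mem_setOf_eq, Finset.coe_product, Set.mem_prod, Finset.mem_coe,
      Finset.mem_Icc]
    constructor
    · rintro ⟨h1, h2, h3, h4, _⟩
      push_cast at h2 h4
      exact ⟨⟨h1, by omega⟩, h3, by omega⟩
    · rintro ⟨⟨h1, h2⟩, h3, h4⟩
      refine ⟨h1, by push_cast; omega, h3, by push_cast; omega, ?_⟩
      intro i hi j hj
      rcases h0 with h | h
      · exact absurd hi (by omega)
      · exact absurd hj (by omega)
  rw [key, Set.ncard_coe_finset, Finset.card_product, Int.card_Icc, Int.card_Icc]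
  have e1 : ((n : ℤ) + 1 - uw + 1 - (-(n : ℤ))).toNat = 2 * n + 2 - uw := by omega
  have e2 : ((n : ℤ) + 1 - uh + 1 - (-(n : ℤ))).toNat = 2 * n + 2 - uh := by omega
  rw [e1, e2]

lemma freqB_tendsto_one_of_degenerate (W : ℤ → ℤ → α) (uw uh : ℕ) (h0 : uw = 0 ∨ uh = 0)
    (u : ℕ → ℕ → α) :
    Tendsto (freqB W uw uh u) atTop (nhds 1) := by
  have hx : Tendsto (fun n : ℕ => 2 * (n : ℝ) + 1) atTop atTop := by
    apply Filter.tendsto_atTop_add_const_right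
    exact (tendsto_natCast_atTop_atTop (R := ℝ)).const_mul_atTop two_pos
  have factor : ∀ c : ℝ, Tendsto (fun n : ℕ => (2 * (n : ℝ) + 2 - c) / (2 * n + 1))
      atTop (nhds 1) := by
    intro c
    have heq : (fun n : ℕ => (2 * (n : ℝ) + 2 - c) / (2 * n + 1)) =
        fun n : ℕ => 1 + (1 - c) / (2 * (n : ℝ) + 1) := by
      funext n
      have hne : (2 * (n : ℝ) + 1) ≠ 0 := by positivity
      field_simp
      ring
    rw [heq]
    have := (tendsto_const_nhds (x := (1 - c : ℝ)) (f := atTop (α := ℕ))).div_atTop hx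
    simpa using tendsto_const_nhds.add this
  have hg : Tendsto (fun n : ℕ => (2 * (n : ℝ) + 2 - uw) / (2 * n + 1) *
      ((2 * (n : ℝ) + 2 - uh) / (2 * n + 1))) atTop (nhds 1) := by
    simpa using (factor uw).mul (factor uh)
  apply hg.congr'
  filter_upwards [eventually_ge_atTop (uw + uh)] with n hn
  rw [freqB, occCountRect_degenerate W uw uh h0 u n hn]
  have h1 : ((2 * n + 2 - uw : ℕ) : ℝ) = 2 * (n : ℝ) + 2 - uw := by
    rw [Nat.cast_sub (by omega)]; push_cast; ring
  have h2 : ((2 * n + 2 - uh : ℕ) : ℝ) = 2 * (n : ℝ) + 2 - uh := by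
    rw [Nat.cast_sub (by omega)]; push_cast; ring
  push_cast [h1, h2]
  rw [pow_two, ← div_mul_div_comm]

lemma buildV (W : ℤ → ℤ → α) (uw uh : ℕ) (u : ℕ → ℕ → α) {P : ℝ → Prop}
    (h : ∃ᶠ n in atTop, P (freqB W uw uh u n)) :
    ∃ V : Set (Blk α), V.Infinite ∧ (∀ B ∈ V, IsBlockOf W B) ∧
      (∀ K : ℕ, ∃ B ∈ V, K ≤ B.1 ∧ K ≤ B.2.1) ∧ ∀ B ∈ V, P (fublk uw uh u B) := by
  refine ⟨blkB W '' {n | P (freqB W uw uh u n)}, ?_, ?_, ?_, ?_⟩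
  case refine_3 =>
    intro K
    obtain ⟨n, hnK, hn⟩ := (frequently_atTop.mp h) K
    exact ⟨blkB W n, ⟨n, hn, rfl⟩, by simp [blkB]; omega, by simp [blkB]; omega⟩
  case refine_1 =>
    apply infinite_of_unbounded_width
    intro K
    obtain ⟨n, hnK, hn⟩ := (frequently_atTop.mp h) K
    exact ⟨blkB W n, ⟨n, hn, rfl⟩, by simp [blkB]; omega⟩
  case refine_2 =>
    rintro B ⟨n, _, rfl⟩
    exact ⟨-(n : ℤ), -(n : ℤ), fun i _ j _ => rfl⟩
  case refine_4 =>
    rintro B ⟨n, hn, rfl⟩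
    rwa [fublk_blkB]

lemma buildQ (W : ℤ → ℤ → α) (uw uh : ℕ) (u : ℕ → ℕ → α)
    {nq mq : ℕ → ℕ} {q : ℕ → ℕ → ℕ → α}
    (hnq : ∀ k : ℕ, k ≤ nq k) (hmq : ∀ k : ℕ, k ≤ mq k)
    (hcov : ∀ k, Covers2 W (nq k) (mq k) (q k)) {P : ℝ → Prop}
    (h : ∃ᶠ k in atTop, P (fublk uw uh u (nq k, mq k, q k))) :
    ∃ Q : Set (Blk α), Q.Infinite ∧ (∀ B ∈ Q, IsCoverOf W B) ∧
      (∀ K : ℕ, ∃ B ∈ Q, K ≤ B.1 ∧ K ≤ B.2.1) ∧ ∀ B ∈ Q, P (fublk uw uh u B) := by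
  refine ⟨(fun k => ((nq k, mq k, q k) : Blk α)) ''
    {k | P (fublk uw uh u (nq k, mq k, q k))}, ?_, ?_, ?_, ?_⟩
  case refine_3 =>
    intro K
    obtain ⟨k, hkK, hk⟩ := (frequently_atTop.mp h) K
    exact ⟨_, ⟨k, hk, rfl⟩, le_trans hkK (hnq k), le_trans hkK (hmq k)⟩
  case refine_1 =>
    apply infinite_of_unbounded_width
    intro K
    obtain ⟨k, hkK, hk⟩ := (frequently_atTop.mp h) K
    exact ⟨_, ⟨k, hk, rfl⟩, le_trans hkK (hnq k)⟩
  case refine_2 =>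
    rintro B ⟨k, _, rfl⟩
    exact hcov k
  case refine_4 =>
    rintro B ⟨k, hk, rfl⟩
    exact hk

end Helpers

theorem stmt13 {α : Type*} (W : ℤ → ℤ → α) (hmsc : MSC W)
    (uw uh : ℕ) (u : ℕ → ℕ → α)
    (hublk : ∃ x y : ℤ, ∀ i < uw, ∀ j < uh, u i j = W (x + (i : ℤ)) (y + (j : ℤ)))
    (hdiv : ¬ ∃ L : ℝ, Filter.Tendsto (freqB W uw uh u) Filter.atTop (nhds L)) :
    ∃ (ε t : ℝ), 0 < ε ∧ t ∈ Set.Icc (0 : ℝ) 1 ∧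
      ∃ V Q : Set (Blk α),
        V.Infinite ∧ Q.Infinite ∧
        (∀ B ∈ V, IsBlockOf W B) ∧ (∀ B ∈ Q, IsCoverOf W B) ∧
        (∀ K : ℕ, ∃ B ∈ V, K ≤ B.1 ∧ K ≤ B.2.1) ∧
        (∀ K : ℕ, ∃ B ∈ Q, K ≤ B.1 ∧ K ≤ B.2.1) ∧
        ((∀ B ∈ Q, ∀ C ∈ V, fublk uw uh u C < t - ε ∧ t < fublk uw uh u B) ∨
         (∀ B ∈ Q, ∀ C ∈ V, t + ε < fublk uw uh u C ∧ fublk uw uh u B < t)) := by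
  
  classical
  have huw : 1 ≤ uw := by
    by_contra h
    exact hdiv ⟨1, freqB_tendsto_one_of_degenerate W uw uh (Or.inl (by omega)) u⟩
  have huh : 1 ≤ uh := by
    by_contra h
    exact hdiv ⟨1, freqB_tendsto_one_of_degenerate W uw uh (Or.inr (by omega)) u⟩
  set F := freqB W uw uh u with hF
  have hF0 : ∀ n, 0 ≤ F n := freqB_nonneg W uw uh u
  have hF1 : ∀ n, F n ≤ 1 := freqB_le_one W uw uh huw huh u
  have hFba : Filter.IsBoundedUnder (· ≤ ·) Filter.atTop F :=
    Filter.isBoundedUnder_of ⟨1, hF1⟩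
  have hFbb : Filter.IsBoundedUnder (· ≥ ·) Filter.atTop F :=
    Filter.isBoundedUnder_of ⟨0, hF0⟩
  have hFcg : Filter.IsCoboundedUnder (· ≥ ·) Filter.atTop F := hFba.isCoboundedUnder_ge
  have hFcl : Filter.IsCoboundedUnder (· ≤ ·) Filter.atTop F := hFbb.isCoboundedUnder_le
  set a := Filter.liminf F Filter.atTop with ha
  set b := Filter.limsup F Filter.atTop with hb
  have hab : a < b := by
    rcases lt_or_ge a b with h | h
    · exact h
    · exfalso
      have heq : a = b := le_antisymm (Filter.liminf_le_limsup hFba hFbb) h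
      exact hdiv ⟨b, tendsto_of_liminf_eq_limsup (by rw [← ha, heq]) (by rw [← hb]) hFba hFbb⟩
  have ha0 : 0 ≤ a := Filter.le_liminf_of_le hFcg (Filter.Eventually.of_forall hF0)
  have hb1 : b ≤ 1 := Filter.limsup_le_of_le hFcl (Filter.Eventually.of_forall hF1)
  choose nq mq q hnq hmq hcov using hmsc
  set G : ℕ → ℝ := fun k => fublk uw uh u (nq k, mq k, q k) with hG
  have hG0 : ∀ k, 0 ≤ G k := fun k => fublk_nonneg uw uh u _
  have hG1 : ∀ k, G k ≤ 1 := fun k => fublk_le_one uw uh huw huh u _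
  have hGba : Filter.IsBoundedUnder (· ≤ ·) Filter.atTop G :=
    Filter.isBoundedUnder_of ⟨1, hG1⟩
  have hGbb : Filter.IsBoundedUnder (· ≥ ·) Filter.atTop G :=
    Filter.isBoundedUnder_of ⟨0, hG0⟩
  have hGcl : Filter.IsCoboundedUnder (· ≤ ·) Filter.atTop G := hGbb.isCoboundedUnder_le
  set s := Filter.limsup G Filter.atTop with hs
  have hs0 : 0 ≤ s :=
    Filter.le_limsup_of_frequently_le (Filter.Frequently.of_forall hG0) hGba
  have hs1 : s ≤ 1 := Filter.limsup_le_of_le hGcl (Filter.Eventually.of_forall hG1)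
  by_cases hcase : a < s
  · -- frequencies of covers cluster above liminf: first branch
    have hε : 0 < (s - a) / 4 := by linarith
    refine ⟨(s - a) / 4, (a + s) / 2, hε, ⟨by linarith, by linarith⟩, ?_⟩
    have hVfreq : ∃ᶠ n in Filter.atTop, F n < (a + s) / 2 - (s - a) / 4 :=
      Filter.frequently_lt_of_liminf_lt hFcg (by rw [← ha]; linarith)
    have hQfreq : ∃ᶠ k in Filter.atTop, (a + s) / 2 < G k :=
      Filter.frequently_lt_of_lt_limsup hGcl (by rw [← hs]; linarith)
    obtain ⟨V, hVinf, hVblk, hVlarge, hVP⟩ :=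
      buildV W uw uh u (P := fun x => x < (a + s) / 2 - (s - a) / 4) hVfreq
    obtain ⟨Q, hQinf, hQcov, hQlarge, hQP⟩ :=
      buildQ W uw uh u hnq hmq hcov (P := fun x => (a + s) / 2 < x) hQfreq
    exact ⟨V, Q, hVinf, hQinf, hVblk, hQcov, hVlarge, hQlarge,
      Or.inl fun B hB C hC => ⟨hVP C hC, hQP B hB⟩⟩
  · -- limsup of cover frequencies below liminf: second branch
    push_neg at hcase
    have hsb : s < b := lt_of_le_of_lt hcase hab
    have hε : 0 < (b - s) / 4 := by linarith
    refine ⟨(b - s) / 4, s + (b - s) / 4, hε, ⟨by linarith, by linarith⟩, ?_⟩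
    have hVfreq : ∃ᶠ n in Filter.atTop, s + (b - s) / 4 + (b - s) / 4 < F n :=
      Filter.frequently_lt_of_lt_limsup hFcl (by rw [← hb]; linarith)
    have hQfreq : ∃ᶠ k in Filter.atTop, G k < s + (b - s) / 4 :=
      (Filter.eventually_lt_of_limsup_lt (by rw [← hs]; linarith) hGba).frequently
    obtain ⟨V, hVinf, hVblk, hVlarge, hVP⟩ :=
      buildV W uw uh u (P := fun x => s + (b - s) / 4 + (b - s) / 4 < x) hVfreq
    obtain ⟨Q, hQinf, hQcov, hQlarge, hQP⟩ :=
      buildQ W uw uh u hnq hmq hcov (P := fun x => x < s + (b - s) / 4) hQfreq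
    exact ⟨V, Q, hVinf, hQinf, hVblk, hQcov, hVlarge, hQlarge,
      Or.inr fun B hB C hC => ⟨hVP C hC, hQP B hB⟩⟩
end

section
/- Let q be a block whose primitive root has a non-empty diagonal border. Then there exists a q-coverable infinite picture 𝐰 : ℤ² → Σ that is not periodic (does not have two non-colinear vectors of periodicity). -/
/-- The block `r` of size `w' × h'` is primitive: its only root is itself. -/
def PrimitiveBlock {α : Type*} (w' h' : ℕ) (r : ℕ → ℕ → α) : Prop :=
  ∀ (w'' h'' : ℕ) (s : ℕ → ℕ → α), IsRoot w'' h'' s w' h' r → w'' = w' ∧ h'' = h'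

/-- The block `r` of size `rw × rh` has a non-empty diagonal border: a block
of strictly smaller width and height occurring in two opposite corners. -/
def HasDiagBorder {α : Type*} (rw rh : ℕ) (r : ℕ → ℕ → α) : Prop :=
  ∃ bw bh : ℕ, 0 < bw ∧ 0 < bh ∧ bw < rw ∧ bh < rh ∧
    ((∀ i < bw, ∀ j < bh, r i j = r (rw - bw + i) (rh - bh + j)) ∨
     (∀ i < bw, ∀ j < bh, r i (rh - bh + j) = r (rw - bw + i) j))

/-- `W` is periodic: it has two non-colinear vectors of periodicity. -/
def Periodic2 {α : Type*} (W : ℤ → ℤ → α) : Prop :=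
  ∃ p1 p2 : ℤ × ℤ, p1 ≠ (0, 0) ∧ p2 ≠ (0, 0) ∧ p1.1 * p2.2 - p1.2 * p2.1 ≠ 0 ∧
    (∀ x y : ℤ, W (x + p1.1) (y + p1.2) = W x y) ∧
    (∀ x y : ℤ, W (x + p2.1) (y + p2.2) = W x y)

/-!
The witness is the doubly periodic picture generated by `r` in which the horizontal strip
`0 ≤ y < h` is shifted one step to the right. Each strip `h k ≤ y < h (k + 1)` is still tiled by
copies of `q`, so the picture is `q`-coverable. A period `(a, b)` with `b ≠ 0` is also a period of
the unshifted picture (compare far above the strip). Comparing the rows just below the upper edge of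
the strip with their translates above it shows that these rows are constant; translations by `b` and
by `rh` carry this to every row, so `r` has a root of width `1`, which primitivity forbids once
`rw ≥ 2`. Hence every period is horizontal and the picture is not periodic.
-/

open Function

section

variable {α : Type*} {w h rw rh : ℕ} {q r : ℕ → ℕ → α}

lemma IsRoot.height_pos (hroot : IsRoot rw rh r w h q) : 0 < (h : ℤ) := by
  obtain ⟨-, hrh, -, ⟨m, hm, rfl⟩, -⟩ := hroot
  positivity

lemma IsRoot.dvd_height_s17 (hroot : IsRoot rw rh r w h q) : (rh : ℤ) ∣ h := by
  obtain ⟨-, -, -, ⟨m, -, rfl⟩, -⟩ := hroot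
  exact_mod_cast Dvd.intro_left m rfl

lemma PrimitiveBlock.width_eq_one_of_forall_eq_zero (hprim : PrimitiveBlock rw rh r)
    (hrw : 0 < rw) (hrh : 0 < rh) (hrows : ∀ x < rw, ∀ y < rh, r x y = r 0 y) : rw = 1 := by
  refine (hprim 1 rh (fun _ y => r 0 y) ⟨one_pos, hrh, ⟨rw, hrw, by simp⟩, ⟨1, one_pos, by simp⟩,
    fun x hx y hy => ?_⟩).1.symm
  simpa [Nat.mod_eq_of_lt hy] using hrows x hx y hy

lemma periodic_rowPeriodic_of_forall {f : ℤ → ℤ → α} {a b : ℤ}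
    (hf : ∀ x y, f (x + a) (y + b) = f x y) : Periodic (fun y => Periodic (f · y) 1) b := by
  intro y
  have hshift : ∀ x, f x (y + b) = f (x - a) y := fun x => by simpa using hf (x - a) y
  refine propext ⟨fun hrow x => ?_, fun hrow x => ?_⟩ <;> dsimp only at hrow ⊢
  · rw [← hf (x + 1) y, ← hf x y, add_right_comm]
    exact hrow (x + a)
  · simp only [hshift, add_sub_right_comm]
    exact hrow (x - a)

def periodicPicture (rw rh : ℕ) (r : ℕ → ℕ → α) (x y : ℤ) : α :=
  r (x % rw).toNat (y % rh).toNat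

lemma periodicPicture_congr {x x' y y' : ℤ} (hx : x ≡ x' [ZMOD rw]) (hy : y ≡ y' [ZMOD rh]) :
    periodicPicture rw rh r x y = periodicPicture rw rh r x' y' := by
  unfold periodicPicture Int.ModEq at *
  rw [hx, hy]

lemma periodicPicture_natCast (i j : ℕ) :
    periodicPicture rw rh r i j = r (i % rw) (j % rh) := by
  rw [periodicPicture, ← Int.natCast_mod, ← Int.natCast_mod, Int.toNat_natCast, Int.toNat_natCast]

lemma periodicPicture_add_mul_height (x y s : ℤ) :
    periodicPicture rw rh r x (y + rh * s) = periodicPicture rw rh r x y :=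
  periodicPicture_congr rfl (Int.add_mul_emod_self_left y rh s)

lemma periodicPicture_add_height (x y : ℤ) :
    periodicPicture rw rh r x (y + rh) = periodicPicture rw rh r x y := by
  simpa using periodicPicture_add_mul_height (r := r) x y 1

def stripShift (rw rh h : ℕ) (r : ℕ → ℕ → α) (x y : ℤ) : α :=
  periodicPicture rw rh r (x - if 0 ≤ y ∧ y < h then 1 else 0) y

lemma stripShift_of_mem {x y : ℤ} (hy : 0 ≤ y ∧ y < h) :
    stripShift rw rh h r x y = periodicPicture rw rh r (x - 1) y := by
  rw [stripShift, if_pos hy]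

lemma stripShift_of_not_mem {x y : ℤ} (hy : ¬ (0 ≤ y ∧ y < h)) :
    stripShift rw rh h r x y = periodicPicture rw rh r x y := by
  rw [stripShift, if_neg hy, sub_zero]

lemma mul_add_mem_Ico_iff {n k j : ℤ} (hn : 0 < n) (hj : 0 ≤ j) (hjn : j < n) :
    (0 ≤ n * k + j ∧ n * k + j < n) ↔ k = 0 := by
  constructor
  · rintro ⟨h0, h1⟩
    have : k < 1 := by nlinarith
    have : -1 < k := by nlinarith
    omega
  · rintro rfl
    omega

lemma occAt_stripShift (hroot : IsRoot rw rh r w h q) {a k : ℤ}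
    (ha : a ≡ (if k = 0 then 1 else 0) [ZMOD rw]) :
    OccAt (stripShift rw rh h r) w h q a (h * k) := by
  intro i hi j hj
  simp only [stripShift,
    mul_add_mem_Ico_iff hroot.height_pos (Int.natCast_nonneg j) (Int.ofNat_lt.mpr hj)]
  rw [hroot.2.2.2.2 i hi j hj, ← periodicPicture_natCast (rw := rw) (rh := rh) (r := r) i j]
  apply periodicPicture_congr
  · calc a + i - (if k = 0 then 1 else 0)
          ≡ (if k = 0 then 1 else 0) + i - (if k = 0 then 1 else 0) [ZMOD rw] :=
            (ha.add_right _).sub_right _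
      _ = i := by ring
  · simpa using ((Int.modEq_zero_iff_dvd.mpr (hroot.dvd_height_s17.mul_right k)).add_right (j : ℤ))

lemma covers2_stripShift (hroot : IsRoot rw rh r w h q) :
    Covers2 (stripShift rw rh h r) w h q := by
  intro x y
  have hrw : 0 < (rw : ℤ) := by exact_mod_cast hroot.1
  have hrw_le : (rw : ℤ) ≤ w := by
    obtain ⟨-, -, ⟨n, hn, hw⟩, -⟩ := hroot
    exact_mod_cast hw ▸ Nat.le_mul_of_pos_left rw hn
  have hh := hroot.height_pos
  set d : ℤ := if y / h = 0 then 1 else 0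
  have hx := Int.mul_ediv_add_emod (x - d) rw
  have hx0 := Int.emod_nonneg (x - d) hrw.ne'
  have hx1 := Int.emod_lt_of_pos (x - d) hrw
  have hy := Int.mul_ediv_add_emod y h
  have hy0 := Int.emod_nonneg y hh.ne'
  have hy1 := Int.emod_lt_of_pos y hh
  refine ⟨d + rw * ((x - d) / rw), h * (y / h), by omega, by omega, by omega, by omega,
    occAt_stripShift hroot (Int.add_mul_emod_self_left d rw _)⟩

lemma periodicPicture_periodic_of_stripShift (hrh : 0 < rh) {a b : ℤ}
    (hper : ∀ x y, stripShift rw rh h r (x + a) (y + b) = stripShift rw rh h r x y) (x y : ℤ) :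
    periodicPicture rw rh r (x + a) (y + b) = periodicPicture rw rh r x y := by
  set s : ℤ := h + |y| + |b|
  have hs : s ≤ rh * s := le_mul_of_one_le_left (by positivity) (by exact_mod_cast hrh)
  have hy : ¬ (0 ≤ y + rh * s ∧ y + rh * s < h) := by
    have := neg_abs_le y
    have := abs_nonneg b
    omega
  have hyb : ¬ (0 ≤ y + rh * s + b ∧ y + rh * s + b < h) := by
    have := neg_abs_le y
    have := neg_abs_le b
    have := abs_nonneg b
    omega
  calc periodicPicture rw rh r (x + a) (y + b)
      = periodicPicture rw rh r (x + a) (y + rh * s + b) := by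
        rw [add_right_comm, periodicPicture_add_mul_height]
    _ = stripShift rw rh h r (x + a) (y + rh * s + b) := (stripShift_of_not_mem hyb).symm
    _ = stripShift rw rh h r x (y + rh * s) := hper _ _
    _ = periodicPicture rw rh r x (y + rh * s) := stripShift_of_not_mem hy
    _ = periodicPicture rw rh r x y := periodicPicture_add_mul_height x y s

lemma false_of_stripShift_period_pos (hroot : IsRoot rw rh r w h q)
    (hprim : PrimitiveBlock rw rh r) (hrw : 2 ≤ rw) {a b : ℤ} (hb : 0 < b)
    (hper : ∀ x y, stripShift rw rh h r (x + a) (y + b) = stripShift rw rh h r x y) : False := by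
  have hrh : 0 < rh := hroot.2.1
  have hP := periodicPicture_periodic_of_stripShift hrh hper
  set rowPeriodic : ℤ → Prop := fun y => Periodic (periodicPicture rw rh r · y) 1
  have hseam : ∀ y : ℤ, 0 ≤ y → y < h → h ≤ y + b → rowPeriodic y := fun y hy0 hyh hyb x =>
    calc periodicPicture rw rh r (x + 1) y
        = stripShift rw rh h r (x + 1 + a) (y + b) := by
          rw [stripShift_of_not_mem (by omega), hP]
      _ = periodicPicture rw rh r x y := by
          rw [hper, stripShift_of_mem ⟨hy0, hyh⟩, add_sub_cancel_right]
  obtain ⟨c, hc0, hcb, hcrh, hc⟩ :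
      ∃ c : ℤ, 0 < c ∧ c ≤ b ∧ c ≤ rh ∧ Periodic rowPeriodic c := by
    rcases le_total b rh with hbrh | hrhb
    · exact ⟨b, hb, le_rfl, hbrh, periodic_rowPeriodic_of_forall hP⟩
    · refine ⟨rh, by positivity, hrhb, le_rfl, fun y => ?_⟩
      simp only [rowPeriodic, periodicPicture_add_height]
  have hrows : ∀ y, rowPeriodic y := fun y => by
    obtain ⟨y', ⟨hy'0, hy'1⟩, hyy'⟩ := hc.exists_mem_Ico hc0 y (h - c)
    have hrh_le : (rh : ℤ) ≤ h := Int.le_of_dvd hroot.height_pos hroot.dvd_height_s17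
    exact hyy' ▸ hseam y' (by omega) (by omega) (by omega)
  refine absurd (hprim.width_eq_one_of_forall_eq_zero hroot.1 hrh fun x hx y hy => ?_) (by omega)
  have := (hrows y).int_mul_eq x
  rw [mul_one, Int.cast_id, ← Nat.cast_zero, periodicPicture_natCast,
    periodicPicture_natCast] at this
  simpa [Nat.mod_eq_of_lt hx, Nat.mod_eq_of_lt hy] using this

lemma stripShift_period_snd_eq_zero (hroot : IsRoot rw rh r w h q)
    (hprim : PrimitiveBlock rw rh r) (hrw : 2 ≤ rw) {a b : ℤ}
    (hper : ∀ x y, stripShift rw rh h r (x + a) (y + b) = stripShift rw rh h r x y) : b = 0 := by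
  rcases lt_trichotomy b 0 with hb | hb | hb
  · refine (false_of_stripShift_period_pos (a := -a) hroot hprim hrw (neg_pos.mpr hb)
      fun x y => ?_).elim
    simpa [sub_eq_add_neg] using (hper (x - a) (y - b)).symm
  · exact hb
  · exact (false_of_stripShift_period_pos hroot hprim hrw hb hper).elim

end

theorem stmt17 {α : Type*} (w h rw rh : ℕ) (q r : ℕ → ℕ → α)
    (hroot : IsRoot rw rh r w h q) (hprim : PrimitiveBlock rw rh r)
    (hdiag : HasDiagBorder rw rh r) :
    ∃ W : ℤ → ℤ → α, Covers2 W w h q ∧ ¬ Periodic2 W := by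
  obtain ⟨bw, -, hbw, -, hbw_lt, -⟩ := hdiag
  refine ⟨stripShift rw rh h r, covers2_stripShift hroot, ?_⟩
  rintro ⟨p₁, p₂, -, -, hdet, hp₁, hp₂⟩
  apply hdet
  rw [stripShift_period_snd_eq_zero hroot hprim (by omega) hp₁,
    stripShift_period_snd_eq_zero hroot hprim (by omega) hp₂]
  ring
end

section
/- Let q be a block whose primitive root has a non-empty diagonal border. Then there exists a q-coverable infinite picture 𝐰 : ℤ² → Σ that is not uniformly recurrent. -/
/-- Auxiliary picture: the periodic extension of `r`, with the right half-plane
shifted vertically by one. -/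
def Wdef {α : Type*} (r : ℕ → ℕ → α) (rw rh : ℕ) : ℤ → ℤ → α :=
  fun x y => r ((x % (rw : ℤ)).toNat) (((if (0:ℤ) ≤ x then y + 1 else y) % (rh : ℤ)).toNat)

lemma aux_mod (rw : ℕ) {a : ℤ} (ha : (rw : ℤ) ∣ a) (i : ℕ) :
    ((a + (i : ℤ)) % (rw : ℤ)).toNat = i % rw := by
  obtain ⟨t, rfl⟩ := ha
  rw [add_comm, Int.add_mul_emod_self_left]
  omega

theorem stmt18 {α : Type*} (w h rw rh : ℕ) (q r : ℕ → ℕ → α)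
    (hroot : IsRoot rw rh r w h q) (hprim : PrimitiveBlock rw rh r)
    (hdiag : HasDiagBorder rw rh r) :
    ∃ W : ℤ → ℤ → α, Covers2 W w h q ∧ ¬ UR2 W := by
  obtain ⟨hrw, hrh, ⟨n, hn, hwn⟩, ⟨m, hm, hhm⟩, hq⟩ := hroot
  obtain ⟨bw, bh, hbw, hbh, hbwlt, hbhlt, -⟩ := hdiag
  have hrh2 : 2 ≤ rh := by omega
  have hw : 0 < w := hwn ▸ Nat.mul_pos hn hrw
  have hh : 0 < h := hhm ▸ Nat.mul_pos hm hrh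
  -- a vertical mismatch witness, obtained from primitivity
  have hwit : ∃ x0 y0, x0 < rw ∧ y0 < rh ∧ r x0 ((y0 + 1) % rh) ≠ r x0 y0 := by
    by_contra hcon
    push_neg at hcon
    have hconst : ∀ x, x < rw → ∀ y, y < rh → r x y = r x 0 := by
      intro x hx y
      induction y with
      | zero => intro _; rfl
      | succ y ih =>
        intro hy
        calc r x (y + 1) = r x ((y + 1) % rh) := by rw [Nat.mod_eq_of_lt hy]
          _ = r x y := hcon x y hx (by omega)
          _ = r x 0 := ih (by omega)
    have hres := hprim rw 1 (fun x _ => r x 0)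
      ⟨hrw, Nat.one_pos, ⟨1, Nat.one_pos, (Nat.one_mul rw).symm⟩,
        ⟨rh, hrh, (Nat.mul_one rh).symm⟩, by
          intro x hx y hy
          simp only
          rw [Nat.mod_eq_of_lt hx]
          exact hconst x hx y hy⟩
    exact absurd hres.2 (by omega)
  obtain ⟨x0, y0, hx0, hy0, hne⟩ := hwit
  have hrwdvdw : (rw : ℤ) ∣ (w : ℤ) := Int.natCast_dvd_natCast.mpr ⟨n, by rw [hwn, Nat.mul_comm]⟩
  have hrhdvdh : (rh : ℤ) ∣ (h : ℤ) := Int.natCast_dvd_natCast.mpr ⟨m, by rw [hhm, Nat.mul_comm]⟩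
  have hwpos : (0:ℤ) < w := by exact_mod_cast hw
  have hhpos : (0:ℤ) < h := by exact_mod_cast hh
  refine ⟨Wdef r rw rh, ?_, ?_⟩
  · -- Covers2
    intro x y
    have hxm := Int.emod_nonneg x (by omega : (w:ℤ) ≠ 0)
    have hxm2 := Int.emod_lt_of_pos x hwpos
    have hwa : (w:ℤ) ∣ (x - x % w) := ⟨x / w, by linarith [Int.mul_ediv_add_emod x (w:ℤ)]⟩
    rcases lt_or_ge x 0 with hx | hx
    · -- left half-plane: tile with copies of `q` lying entirely in the left half
      have hym := Int.emod_nonneg y (by omega : (h:ℤ) ≠ 0)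
      have hym2 := Int.emod_lt_of_pos y hhpos
      have hha : (h:ℤ) ∣ (y - y % h) := ⟨y / h, by linarith [Int.mul_ediv_add_emod y (h:ℤ)]⟩
      have haw : (x - x % w) + w ≤ 0 := by
        obtain ⟨c, hc⟩ := hwa
        have hc0 : c < 0 := by
          by_contra hcc
          push_neg at hcc
          nlinarith
        nlinarith
      refine ⟨x - x % w, y - y % h, by omega, by omega, by omega, by omega, ?_⟩
      intro i hi j hj
      have hiw : (i:ℤ) < w := by exact_mod_cast hi
      show Wdef r rw rh _ _ = q i j
      rw [Wdef]
      rw [if_neg (by omega : ¬ (0:ℤ) ≤ (x - x % w) + (i:ℤ))]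
      rw [aux_mod rw (dvd_trans hrwdvdw hwa) i, aux_mod rh (dvd_trans hrhdvdh hha) j,
        hq i hi j hj]
    · -- right half-plane
      have hym := Int.emod_nonneg (y+1) (by omega : (h:ℤ) ≠ 0)
      have hym2 := Int.emod_lt_of_pos (y+1) hhpos
      have hhb : (h:ℤ) ∣ ((y - (y+1) % h) + 1) :=
        ⟨(y+1) / h, by linarith [Int.mul_ediv_add_emod (y+1) (h:ℤ)]⟩
      have ha0 : 0 ≤ x - x % w := by
        have h1 : 0 ≤ x / (w:ℤ) := Int.ediv_nonneg hx hwpos.le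
        have h2 := Int.mul_ediv_add_emod x (w:ℤ)
        nlinarith
      refine ⟨x - x % w, y - (y+1) % h, by omega, by omega, by omega, by omega, ?_⟩
      intro i hi j hj
      show Wdef r rw rh _ _ = q i j
      rw [Wdef]
      rw [if_pos (by omega : (0:ℤ) ≤ (x - x % w) + (i:ℤ))]
      rw [show (y - (y+1) % (h:ℤ)) + (j:ℤ) + 1 = ((y - (y+1) % h) + 1) + (j:ℤ) from by ring]
      rw [aux_mod rw (dvd_trans hrwdvdw hwa) i, aux_mod rh (dvd_trans hrhdvdh hhb) j,
        hq i hi j hj]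
  · -- not uniformly recurrent
    intro hUR
    obtain ⟨ℓ, hℓ⟩ := hUR (2*rw + rh)
    obtain ⟨a, b, -, ha2, -, -, hmatch⟩ := hℓ (-(rw:ℤ)) 0 (-(ℓ:ℤ)) 0
    have hak : a + (2*rw + rh : ℕ) ≤ 0 := by omega
    have key : ∀ i, i < rw → ∀ j, j < rh → r i j = r i ((j+1) % rh) := by
      intro i hi j hj
      have h1 := hmatch i (by omega) j (by omega)
      have h2 := hmatch (rw + i) (by omega) j (by omega)
      rw [Wdef, Wdef] at h1 h2
      rw [if_neg (by omega : ¬ (0:ℤ) ≤ a + (i:ℤ)),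
        if_neg (by omega : ¬ (0:ℤ) ≤ -(rw:ℤ) + (i:ℤ)),
        aux_mod rw (by simp : (rw:ℤ) ∣ -(rw:ℤ)) i,
        Nat.mod_eq_of_lt hi,
        aux_mod rh (dvd_zero _) j,
        Nat.mod_eq_of_lt hj] at h1
      rw [if_neg (by omega : ¬ (0:ℤ) ≤ a + ((rw + i : ℕ):ℤ)),
        if_pos (by omega : (0:ℤ) ≤ -(rw:ℤ) + ((rw + i : ℕ):ℤ)),
        show a + ((rw + i : ℕ):ℤ) = (a + (i:ℤ)) + (rw:ℤ) * 1 from by push_cast; ring,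
        Int.add_mul_emod_self_left,
        show -(rw:ℤ) + ((rw + i : ℕ):ℤ) = (0:ℤ) + (i:ℤ) from by push_cast; ring,
        aux_mod rw (dvd_zero _) i,
        Nat.mod_eq_of_lt hi,
        show (0:ℤ) + (j:ℤ) + 1 = (0:ℤ) + ((j+1 : ℕ):ℤ) from by push_cast; ring,
        aux_mod rh (dvd_zero _) (j+1)] at h2
      exact h1.symm.trans h2
    exact hne (key x0 hx0 y0 hy0).symm
end

section
/- The bi-infinite word ω(ab)·a·(ab)^ω (that is, w : ℤ → {a,b} alternating a,b on both sides of a single factor 'aa', so that exactly one factor 'aa' occurs) is multi-scale coverable — every word of the form a(ba)^k for k ≥ 1 is a cover — but it is not uniformly recurrent, since the factor 'aa' occurs exactly once. -/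
/-- The bi-infinite word `ω(ab)·a·(ab)^ω`: here the letter `a` is `true`,
`b` is `false`, `w 0 = w 1 = a`, and the word alternates on both sides. -/
def wZ : ℤ → Bool := fun i => if i ≤ 0 then decide (i % 2 = 0) else decide (i % 2 = 1)

/-- The finite word `q` covers the bi-infinite word `w`. -/
def CoversZ (q : List Bool) (w : ℤ → Bool) : Prop :=
  ∀ x : ℤ, ∃ a : ℤ, a ≤ x ∧ x < a + (q.length : ℤ) ∧
    ∀ j < q.length, w (a + (j : ℤ)) = q.getD j false

/-- `w` is uniformly recurrent: every length-`k` factor occurs in every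
length-`ℓ` window, for some `ℓ` depending on `k`. -/
def URZ (w : ℤ → Bool) : Prop :=
  ∀ k : ℕ, ∃ ℓ : ℕ, ∀ x x' : ℤ, ∃ a : ℤ,
    x' ≤ a ∧ a + (k : ℤ) ≤ x' + (ℓ : ℤ) ∧
      ∀ j < k, w (a + (j : ℤ)) = w (x + (j : ℤ))

lemma qgetD : ∀ (k j : ℕ), j ≤ 2*k →
    (true :: (List.replicate k [false, true]).flatten).getD j false = decide (j % 2 = 0) := by
  intro k
  induction k with
  | zero => intro j hj; interval_cases j; simp
  | succ k ih =>
      intro j hj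
      rw [List.replicate_succ, List.flatten_cons]
      match j with
      | 0 => simp
      | 1 => simp
      | (m+2) =>
          have := ih m (by omega)
          simpa [Nat.add_mod_right, List.getD] using this

lemma qlen (k : ℕ) : (true :: (List.replicate k [false, true]).flatten).length = 2*k+1 := by
  simp [List.length_flatten, List.map_replicate, List.sum_replicate, Nat.mul_comm]

lemma wZval (i : ℤ) : wZ i = if i ≤ 0 then decide (i % 2 = 0) else decide (i % 2 = 1) := rfl

theorem stmt19 :
    (∀ k : ℕ, 1 ≤ k →
      CoversZ (true :: (List.replicate k [false, true]).flatten) wZ) ∧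
    {i : ℤ | wZ i = true ∧ wZ (i + 1) = true} = {0} ∧
    ¬ URZ wZ := by
  refine ⟨?_, ?_, ?_⟩
  · intro k hk x
    have hl := qlen k
    by_cases hx : x ≤ 0
    · by_cases hx2 : x ≤ -(2*k : ℤ)
      · refine ⟨2*(x/2), by omega, by rw [hl]; push_cast; omega, ?_⟩
        intro j hj
        rw [hl] at hj
        rw [qgetD k j (by omega), wZval]
        have h1 : 2*(x/2) + (j:ℤ) ≤ 0 := by omega
        rw [if_pos h1]
        rw [decide_eq_decide]
        omega
      · refine ⟨-(2*k:ℤ), by omega, by rw [hl]; push_cast; omega, ?_⟩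
        intro j hj
        rw [hl] at hj
        rw [qgetD k j (by omega), wZval]
        have h1 : -(2*k:ℤ) + (j:ℤ) ≤ 0 := by omega
        rw [if_pos h1]
        rw [decide_eq_decide]
        omega
    · refine ⟨2*((x-1)/2)+1, by omega, by rw [hl]; push_cast; omega, ?_⟩
      intro j hj
      rw [hl] at hj
      rw [qgetD k j (by omega), wZval]
      have h1 : ¬ (2*((x-1)/2)+1 + (j:ℤ) ≤ 0) := by omega
      rw [if_neg h1]
      rw [decide_eq_decide]
      omega
  · ext i
    simp only [Set.mem_setOf_eq, Set.mem_singleton_iff, wZ]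
    split_ifs <;> simp only [decide_eq_true_eq, true_and, and_true, false_iff, not_and] <;> omega
  · intro h
    obtain ⟨ℓ, hℓ⟩ := h 2
    obtain ⟨a, ha1, _, ha3⟩ := hℓ 0 1
    have h0 := ha3 0 (by norm_num)
    have h1 := ha3 1 (by norm_num)
    rw [show a + (0:ℕ) = a by push_cast; ring, show (0:ℤ) + (0:ℕ) = 0 by norm_num] at h0
    rw [show a + (1:ℕ) = a + 1 by push_cast; ring, show (0:ℤ) + (1:ℕ) = 1 by norm_num] at h1
    rw [wZval, wZval, if_neg (by omega : ¬ (a ≤ 0)), if_pos (by omega : (0:ℤ) ≤ 0)] at h0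
    rw [wZval, wZval, if_neg (by omega : ¬ (a+1 ≤ 0)), if_neg (by omega : ¬ ((1:ℤ) ≤ 0))] at h1
    simp only [decide_eq_decide] at h0 h1
    omega
end
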